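/- arXiv:2406.08389 — 8 statements merged into one kernel-verified Lean document; each statement's English description precedes it below -/
import Mathlib

section
/- Let f : ℍ → ℍ be holomorphic (f holomorphic on ℍ with f(ℍ) ⊆ ℍ). Suppose that for every z ∈ ℍ the orbit satisfies |f^[n](z)| → ∞ and arg(f^[n](z)) converges to a limit belonging to {0, π}. Then either arg(f^[n](z)) → 0 for every z ∈ ℍ, or arg(f^[n](z)) → π for every z ∈ ℍ; the two alternatives cannot occur for different starting points. -/
open Filter Topology

private lemma abs_sub_lt_conj {a b : ℂ} (ha : 0 < a.im) (hb : 0 < b.im) :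
    ‖a - b‖ < ‖a - (starRingEnd ℂ) b‖ := by
  rw [Complex.norm_def, Complex.norm_def]
  apply Real.sqrt_lt_sqrt (Complex.normSq_nonneg _)
  simp only [Complex.normSq_apply, Complex.sub_re, Complex.sub_im, Complex.conj_re,
    Complex.conj_im]
  nlinarith

private lemma sub_conj_ne {a b : ℂ} (ha : 0 < a.im) (hb : 0 < b.im) :
    a - (starRingEnd ℂ) b ≠ 0 := by
  intro h
  have := congrArg Complex.im h
  simp [Complex.sub_im, Complex.conj_im] at this
  linarith

private lemma schwarz_pick (f : ℂ → ℂ)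
    (hf : DifferentiableOn ℂ f {z : ℂ | 0 < z.im})
    (hmaps : Set.MapsTo f {z : ℂ | 0 < z.im} {z : ℂ | 0 < z.im})
    {z w : ℂ} (hz : 0 < z.im) (hw : 0 < w.im) :
    ‖f z - f w‖ / ‖f z - (starRingEnd ℂ) (f w)‖ ≤
      ‖z - w‖ / ‖z - (starRingEnd ℂ) w‖ := by
  have hb : 0 < (f w).im := hmaps hw
  set S : ℂ → ℂ := fun u => (w - (starRingEnd ℂ) w * u) / (1 - u) with hSdef
  have hden : ∀ u ∈ Metric.ball (0:ℂ) 1, (1 : ℂ) - u ≠ 0 := by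
    intro u hu h
    have : u = 1 := by linear_combination -h
    rw [this] at hu
    simp at hu
  have hS_im : ∀ u ∈ Metric.ball (0:ℂ) 1, 0 < (S u).im := by
    intro u hu
    have h1 : Complex.normSq u < 1 := by
      have := Metric.mem_ball.1 hu
      rw [dist_zero_right] at this
      have h2 : Complex.normSq u = ‖u‖ ^ 2 := (Complex.sq_norm u).symm
      nlinarith [norm_nonneg u]
    have hd := hden u hu
    have hns : 0 < Complex.normSq (1 - u) := Complex.normSq_pos.2 hd
    rw [hSdef]
    simp only [Complex.div_im]
    rw [div_sub_div_same]
    apply div_pos _ hns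
    have h1' : u.re * u.re + u.im * u.im < 1 := by
      rw [Complex.normSq_apply] at h1; linarith
    simp only [Complex.sub_im, Complex.sub_re, Complex.mul_im, Complex.mul_re,
      Complex.conj_re, Complex.conj_im, Complex.one_re, Complex.one_im]
    nlinarith
  have hS_diff : DifferentiableOn ℂ S (Metric.ball (0:ℂ) 1) := by
    apply DifferentiableOn.div
    · exact (differentiableOn_const _).sub
        ((differentiableOn_const _).mul differentiableOn_id)
    · exact (differentiableOn_const _).sub differentiableOn_id
    · exact hden
  set g : ℂ → ℂ := fun u => (f (S u) - f w) / (f (S u) - (starRingEnd ℂ) (f w)) with hgdef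
  have hfS : ∀ u ∈ Metric.ball (0:ℂ) 1, 0 < (f (S u)).im := fun u hu => hmaps (hS_im u hu)
  have hfS_diff : DifferentiableOn ℂ (fun u => f (S u)) (Metric.ball (0:ℂ) 1) :=
    hf.comp hS_diff (fun u hu => hS_im u hu)
  have hg_diff : DifferentiableOn ℂ g (Metric.ball (0:ℂ) 1) := by
    apply DifferentiableOn.div
    · exact hfS_diff.sub (differentiableOn_const _)
    · exact hfS_diff.sub (differentiableOn_const _)
    · exact fun u hu => sub_conj_ne (hfS u hu) hb
  have hg_maps : Set.MapsTo g (Metric.ball (0:ℂ) 1) (Metric.ball (0:ℂ) 1) := by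
    intro u hu
    rw [Metric.mem_ball, dist_zero_right, hgdef]
    simp only [norm_div]
    rw [div_lt_one (norm_pos_iff.mpr (sub_conj_ne (hfS u hu) hb))]
    exact abs_sub_lt_conj (hfS u hu) hb
  have hS0 : S 0 = w := by simp [hSdef]
  have hg0 : g 0 = 0 := by simp [hgdef, hS0]
  have hzw' : z - (starRingEnd ℂ) w ≠ 0 := sub_conj_ne hz hw
  have hTz : ‖(z - w) / (z - (starRingEnd ℂ) w)‖ < 1 := by
    rw [norm_div, div_lt_one (norm_pos_iff.mpr hzw')]
    exact abs_sub_lt_conj hz hw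
  have key := Complex.norm_le_norm_of_mapsTo_ball hg_diff (hg_maps.mono_right Metric.ball_subset_closedBall) hg0 hTz
  have hww : w - (starRingEnd ℂ) w ≠ 0 := sub_conj_ne hw hw
  have hden2 : (1 : ℂ) - (z - w) / (z - (starRingEnd ℂ) w) ≠ 0 := by
    have : (1 : ℂ) - (z - w) / (z - (starRingEnd ℂ) w)
        = (w - (starRingEnd ℂ) w) / (z - (starRingEnd ℂ) w) := by
      field_simp
      ring
    rw [this]
    exact div_ne_zero hww hzw'
  have hSz : S ((z - w) / (z - (starRingEnd ℂ) w)) = z := by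
    rw [hSdef]
    rw [div_eq_iff hden2]
    field_simp
    ring
  rw [hgdef] at key
  simp only [hSz] at key
  rw [norm_div, norm_div] at key
  exact key

private lemma not_mixed (f : ℂ → ℂ)
    (hf : DifferentiableOn ℂ f {z : ℂ | 0 < z.im})
    (hmaps : Set.MapsTo f {z : ℂ | 0 < z.im} {z : ℂ | 0 < z.im})
    {z w : ℂ} (hz : 0 < z.im) (hw : 0 < w.im)
    (hz0 : Tendsto (fun n => (f^[n] z).arg) atTop (nhds 0))
    (hwpi : Tendsto (fun n => (f^[n] w).arg) atTop (nhds Real.pi)) : False := by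
  have hzn : ∀ n, 0 < (f^[n] z).im := by
    intro n; induction n with
    | zero => exact hz
    | succ n ih => rw [Function.iterate_succ_apply']; exact hmaps ih
  have hwn : ∀ n, 0 < (f^[n] w).im := by
    intro n; induction n with
    | zero => exact hw
    | succ n ih => rw [Function.iterate_succ_apply']; exact hmaps ih
  set c : ℝ := ‖z - w‖ / ‖z - (starRingEnd ℂ) w‖ with hcdef
  have hc1 : c < 1 := by
    rw [hcdef, div_lt_one (norm_pos_iff.mpr (sub_conj_ne hz hw))]
    exact abs_sub_lt_conj hz hw
  have hc0 : 0 ≤ c := div_nonneg (norm_nonneg _) (norm_nonneg _)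
  have sp_iter : ∀ n, ‖f^[n] z - f^[n] w‖ /
      ‖f^[n] z - (starRingEnd ℂ) (f^[n] w)‖ ≤ c := by
    intro n; induction n with
    | zero => simp [hcdef]
    | succ n ih =>
      rw [Function.iterate_succ_apply', Function.iterate_succ_apply']
      exact (schwarz_pick f hf hmaps (hzn n) (hwn n)).trans ih
  have e1 : ∀ᶠ n in atTop, (1:ℝ)/2 ≤ Real.cos ((f^[n] z).arg) := by
    have := (Real.continuous_cos.continuousAt (x := (0:ℝ))).tendsto.comp hz0
    rw [Real.cos_zero] at this
    exact this.eventually (eventually_ge_nhds (by norm_num))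
  have e2 : ∀ᶠ n in atTop, Real.cos ((f^[n] w).arg) ≤ -(1/2) := by
    have := (Real.continuous_cos.continuousAt (x := Real.pi)).tendsto.comp hwpi
    rw [Real.cos_pi] at this
    exact this.eventually (eventually_le_nhds (by norm_num))
  have e3 : ∀ᶠ n in atTop, Real.sin ((f^[n] w).arg) ≤ (1 - c)/8 := by
    have := (Real.continuous_sin.continuousAt (x := Real.pi)).tendsto.comp hwpi
    rw [Real.sin_pi] at this
    exact this.eventually (eventually_le_nhds (by linarith))
  obtain ⟨n, h1, h2, h3⟩ := (e1.and (e2.and e3)).exists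
  set Z := f^[n] z with hZ
  set W := f^[n] w with hW
  have hZim : 0 < Z.im := hzn n
  have hWim : 0 < W.im := hwn n
  have hZne : Z ≠ 0 := by intro h; rw [h] at hZim; simp at hZim
  have hWne : W ≠ 0 := by intro h; rw [h] at hWim; simp at hWim
  have hZa : 0 < ‖Z‖ := norm_pos_iff.mpr hZne
  have hWa : 0 < ‖W‖ := norm_pos_iff.mpr hWne
  have hZre : Z.re = ‖Z‖ * Real.cos Z.arg := by
    rw [Complex.cos_arg hZne]; field_simp
  have hWre : W.re = ‖W‖ * Real.cos W.arg := by
    rw [Complex.cos_arg hWne]; field_simp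
  have hWimeq : W.im = ‖W‖ * Real.sin W.arg := by
    rw [Complex.sin_arg]; field_simp
  have hZre' : 0 ≤ Z.re := by
    rw [hZre]; nlinarith
  have hWre' : W.re ≤ -(‖W‖ / 2) := by
    rw [hWre]; nlinarith
  have hWim' : W.im ≤ ‖W‖ * ((1 - c) / 8) := by
    rw [hWimeq]; nlinarith
  set A := ‖Z - W‖ with hA
  set A' := ‖Z - (starRingEnd ℂ) W‖ with hA'
  have hA'pos : 0 < A' := norm_pos_iff.mpr (sub_conj_ne hZim hWim)
  have hle : A ≤ c * A' := by
    have := sp_iter n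
    rw [div_le_iff₀ hA'pos] at this
    exact this
  have hDle : ‖W‖ / 2 ≤ A := by
    have h5 : (Z - W).re ≤ A := Complex.re_le_norm _
    rw [Complex.sub_re] at h5
    linarith
  have htri : A' ≤ A + 2 * W.im := by
    have heq : Z - (starRingEnd ℂ) W = (Z - W) + (W - (starRingEnd ℂ) W) := by ring
    have habs2 : ‖W - (starRingEnd ℂ) W‖ = 2 * W.im := by
      have : W - (starRingEnd ℂ) W = ((2 * W.im : ℝ) : ℂ) * Complex.I := by
        apply Complex.ext <;> simp [Complex.sub_re, Complex.sub_im, Complex.conj_re,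
          Complex.conj_im] <;> ring
      rw [this, norm_mul, Complex.norm_I, Complex.norm_real, mul_one, Real.norm_eq_abs,
        abs_of_pos (by linarith)]
    calc A' ≤ ‖Z - W‖ + ‖W - (starRingEnd ℂ) W‖ := by
          rw [hA', heq]; exact norm_add_le _ _
      _ = A + 2 * W.im := by rw [habs2]
  nlinarith [mul_pos hWa hWim, mul_nonneg hc0 hWim.le, mul_nonneg hc0 hWa.le,
    mul_nonneg hc0 (mul_nonneg hWa.le (by linarith : (0:ℝ) ≤ (1 - c) / 8))]

/-- If `f` is a holomorphic self-map of the upper half-plane such that every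
orbit tends to `∞` in modulus with argument converging to either `0` or `π`, then the
limit value of the argument is the same (`0` for all points, or `π` for all points). -/
theorem slope_zero_or_pi_independent_of_point (f : ℂ → ℂ)
    (hf : DifferentiableOn ℂ f {z : ℂ | 0 < z.im})
    (hmaps : Set.MapsTo f {z : ℂ | 0 < z.im} {z : ℂ | 0 < z.im})
    (habs : ∀ z : ℂ, 0 < z.im → Tendsto (fun n => ‖f^[n] z‖) atTop atTop)
    (harg : ∀ z : ℂ, 0 < z.im → ∃ s ∈ ({0, Real.pi} : Set ℝ),
      Tendsto (fun n => (f^[n] z).arg) atTop (nhds s)) :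
    (∀ z : ℂ, 0 < z.im → Tendsto (fun n => (f^[n] z).arg) atTop (nhds 0)) ∨
      (∀ z : ℂ, 0 < z.im → Tendsto (fun n => (f^[n] z).arg) atTop (nhds Real.pi)) := by
  have hI : (0:ℝ) < Complex.I.im := by simp
  obtain ⟨s, hs, hts⟩ := harg Complex.I hI
  simp only [Set.mem_insert_iff, Set.mem_singleton_iff] at hs
  rcases hs with rfl | rfl
  · left
    intro z hz
    obtain ⟨t, ht, htt⟩ := harg z hz
    simp only [Set.mem_insert_iff, Set.mem_singleton_iff] at ht
    rcases ht with rfl | rfl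
    · exact htt
    · exact absurd (not_mixed f hf hmaps hI hz hts htt) (by simp)
  · right
    intro z hz
    obtain ⟨t, ht, htt⟩ := harg z hz
    simp only [Set.mem_insert_iff, Set.mem_singleton_iff] at ht
    rcases ht with rfl | rfl
    · exact absurd (not_mixed f hf hmaps hz hI htt hts) (by simp)
    · exact htt
end

section
/- Let f : ℍ → ℍ be holomorphic and let z₀, w₀ ∈ ℍ be such that |f^[n](z₀)| → ∞, |f^[n](w₀)| → ∞, and ρ(f^[n](z₀), f^[n](w₀)) → 0 as n → ∞, where ρ is the pseudo-hyperbolic distance. Then Slope[f, z₀] = Slope[f, w₀]; that is, the sets of limit points of arg(f^[n](z₀)) and of arg(f^[n](w₀)) coincide. -/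
open Filter Topology

lemma poly_key (x y u v r s : ℝ) (hr : 0 < r) (hs : 0 < s)
    (hr2 : r ^ 2 = x ^ 2 + y ^ 2) (hs2 : s ^ 2 = u ^ 2 + v ^ 2) :
    (r * s - (x * u + y * v)) * ((x - u) ^ 2 + (y + v) ^ 2) ≤
      2 * (r * s) * ((x - u) ^ 2 + (y - v) ^ 2) := by
  have ht : 0 < r * s := mul_pos hr hs
  have hrs2 : (r * s) ^ 2 = (x ^ 2 + y ^ 2) * (u ^ 2 + v ^ 2) := by
    rw [mul_pow, hr2, hs2]
  have hP : 0 ≤ x ^ 2 + y ^ 2 + u ^ 2 + v ^ 2 - 2 * (r * s) := by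
    nlinarith [sq_nonneg (r - s)]
  have hQ : 0 ≤ r * s + (x * u + y * v) := by
    nlinarith [sq_nonneg (x * v - y * u), ht, hrs2]
  have hR : 0 ≤ r * s - (x * u + y * v) := by
    nlinarith [sq_nonneg (x * v - y * u), ht, hrs2]
  have hS : 0 ≤ r * s + (x * u - y * v) := by
    nlinarith [sq_nonneg (x * v + y * u), ht, hrs2]
  nlinarith [mul_nonneg hP hQ, mul_nonneg hR hS, hrs2]

lemma key_ineq (z w : ℂ) (hz : 0 < z.im) (hw : 0 < w.im) :
    |z.arg - w.arg| ≤ Real.pi * (‖z - w‖ / ‖z - (starRingEnd ℂ) w‖) := by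
  have hz0 : z ≠ 0 := fun h => by simp [h] at hz
  have hw0 : w ≠ 0 := fun h => by simp [h] at hw
  have hr : 0 < ‖z‖ := norm_pos_iff.mpr hz0
  have hs : 0 < ‖w‖ := norm_pos_iff.mpr hw0
  have hB : 0 < ‖z - (starRingEnd ℂ) w‖ := by
    have him : (z - (starRingEnd ℂ) w).im = z.im + w.im := by
      simp [Complex.sub_im, Complex.conj_im]
    have hne : z - (starRingEnd ℂ) w ≠ 0 := fun h => by
      rw [h] at him; simp at him; linarith
    exact norm_pos_iff.mpr hne
  set r := ‖z‖ with hrdef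
  set s := ‖w‖ with hsdef
  set x := z.re; set y := z.im; set u := w.re; set v := w.im
  have hr2 : r ^ 2 = x ^ 2 + y ^ 2 := by
    rw [hrdef, Complex.sq_norm, Complex.normSq_apply]; ring
  have hs2 : s ^ 2 = u ^ 2 + v ^ 2 := by
    rw [hsdef, Complex.sq_norm, Complex.normSq_apply]; ring
  have hA2 : ‖z - w‖ ^ 2 = (x - u) ^ 2 + (y - v) ^ 2 := by
    rw [Complex.sq_norm, Complex.normSq_apply]
    simp only [Complex.sub_re, Complex.sub_im]; ring
  have hB2 : ‖z - (starRingEnd ℂ) w‖ ^ 2 = (x - u) ^ 2 + (y + v) ^ 2 := by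
    rw [Complex.sq_norm, Complex.normSq_apply]
    simp only [Complex.sub_re, Complex.sub_im, Complex.conj_re, Complex.conj_im]; ring
  have hcos : Real.cos (z.arg - w.arg) = (x * u + y * v) / (r * s) := by
    rw [Real.cos_sub, Complex.cos_arg hz0, Complex.cos_arg hw0, Complex.sin_arg,
      Complex.sin_arg]
    field_simp
    simp only [x, y, u, v, hrdef, hsdef]; ring
  have ht : 0 < r * s := mul_pos hr hs
  have h1 := poly_key x y u v r s hr hs hr2 hs2
  have hcore : (1 - Real.cos (z.arg - w.arg)) / 2 * ‖z - (starRingEnd ℂ) w‖ ^ 2 ≤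
      ‖z - w‖ ^ 2 := by
    rw [hcos, hA2, hB2]
    have heq : (1 - (x * u + y * v) / (r * s)) / 2 * ((x - u) ^ 2 + (y + v) ^ 2) =
        (r * s - (x * u + y * v)) * ((x - u) ^ 2 + (y + v) ^ 2) / (2 * (r * s)) := by
      rw [one_sub_div ht.ne', div_div, div_mul_eq_mul_div, mul_comm (r * s) 2]
    rw [heq, div_le_iff₀ (by positivity)]
    linarith
  have hsin : |Real.sin ((z.arg - w.arg) / 2)| ≤
      ‖z - w‖ / ‖z - (starRingEnd ℂ) w‖ := by
    rw [Real.abs_sin_half]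
    rw [show ‖z - w‖ / ‖z - (starRingEnd ℂ) w‖ =
        Real.sqrt ((‖z - w‖ / ‖z - (starRingEnd ℂ) w‖) ^ 2) from
      (Real.sqrt_sq (by positivity)).symm]
    apply Real.sqrt_le_sqrt
    rw [div_pow, le_div_iff₀ (by positivity)]
    exact hcore
  have hz_arg0 : 0 ≤ z.arg := Complex.arg_nonneg_iff.mpr hz.le
  have hw_arg0 : 0 ≤ w.arg := Complex.arg_nonneg_iff.mpr hw.le
  have hz_argpi : z.arg < Real.pi := Complex.arg_lt_pi_iff.mpr (Or.inr hz.ne')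
  have hw_argpi : w.arg < Real.pi := Complex.arg_lt_pi_iff.mpr (Or.inr hw.ne')
  have hpi : 0 < Real.pi := Real.pi_pos
  have habs : |(z.arg - w.arg) / 2| ≤ Real.pi / 2 := by
    rw [abs_div, abs_two]
    have : |z.arg - w.arg| ≤ Real.pi := abs_le.mpr ⟨by linarith, by linarith⟩
    linarith
  have h2 := (Real.mul_abs_le_abs_sin habs).trans hsin
  rw [abs_div, abs_two] at h2
  have h4 := mul_le_mul_of_nonneg_left h2 hpi.le
  calc |z.arg - w.arg|
      = Real.pi * (2 / Real.pi * (|z.arg - w.arg| / 2)) := by field_simp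
    _ ≤ Real.pi * (‖z - w‖ / ‖z - (starRingEnd ℂ) w‖) := h4

lemma arg_diff_tendsto (f : ℂ → ℂ)
    (hmaps : Set.MapsTo f {z : ℂ | 0 < z.im} {z : ℂ | 0 < z.im})
    (z₀ w₀ : ℂ) (hz₀ : 0 < z₀.im) (hw₀ : 0 < w₀.im)
    (hρ : Tendsto (fun n => ‖f^[n] z₀ - f^[n] w₀‖ /
      ‖f^[n] z₀ - (starRingEnd ℂ) (f^[n] w₀)‖) atTop (nhds 0)) :
    Tendsto (fun n => (f^[n] z₀).arg - (f^[n] w₀).arg) atTop (nhds 0) := by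
  have hzim : ∀ n, 0 < (f^[n] z₀).im := by
    intro n; induction n with
    | zero => simpa using hz₀
    | succ n ih => rw [Function.iterate_succ_apply']; exact hmaps ih
  have hwim : ∀ n, 0 < (f^[n] w₀).im := by
    intro n; induction n with
    | zero => simpa using hw₀
    | succ n ih => rw [Function.iterate_succ_apply']; exact hmaps ih
  have hbound : ∀ n, ‖(f^[n] z₀).arg - (f^[n] w₀).arg‖ ≤
      Real.pi * (‖f^[n] z₀ - f^[n] w₀‖ /
        ‖f^[n] z₀ - (starRingEnd ℂ) (f^[n] w₀)‖) := fun n =>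
    key_ineq _ _ (hzim n) (hwim n)
  have hlim : Tendsto (fun n => Real.pi * (‖f^[n] z₀ - f^[n] w₀‖ /
      ‖f^[n] z₀ - (starRingEnd ℂ) (f^[n] w₀)‖)) atTop (nhds 0) := by
    simpa using hρ.const_mul Real.pi
  exact squeeze_zero_norm hbound hlim

/-- For a holomorphic self-map `f` of the upper half-plane and points
`z₀, w₀` whose orbits tend to `∞` in modulus with pseudo-hyperbolic distance between
the orbits tending to `0`, the sets of limit points of the arguments of the two orbits
(`Slope[f, z₀]` and `Slope[f, w₀]`) coincide. -/
theorem slope_set_eq_of_pseudoHyperbolic_tendsto_zero (f : ℂ → ℂ)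
    (hf : DifferentiableOn ℂ f {z : ℂ | 0 < z.im})
    (hmaps : Set.MapsTo f {z : ℂ | 0 < z.im} {z : ℂ | 0 < z.im})
    (z₀ w₀ : ℂ) (hz₀ : 0 < z₀.im) (hw₀ : 0 < w₀.im)
    (hzabs : Tendsto (fun n => ‖f^[n] z₀‖) atTop atTop)
    (hwabs : Tendsto (fun n => ‖f^[n] w₀‖) atTop atTop)
    (hρ : Tendsto (fun n => ‖f^[n] z₀ - f^[n] w₀‖ /
      ‖f^[n] z₀ - (starRingEnd ℂ) (f^[n] w₀)‖) atTop (nhds 0)) :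
    {s : ℝ | ∃ φ : ℕ → ℕ, StrictMono φ ∧
        Tendsto (fun k => (f^[φ k] z₀).arg) atTop (nhds s)} =
      {s : ℝ | ∃ φ : ℕ → ℕ, StrictMono φ ∧
        Tendsto (fun k => (f^[φ k] w₀).arg) atTop (nhds s)} := by
  have hΔ := arg_diff_tendsto f hmaps z₀ w₀ hz₀ hw₀ hρ
  ext s
  simp only [Set.mem_setOf_eq]
  constructor
  · rintro ⟨φ, hφ, hlim⟩
    refine ⟨φ, hφ, ?_⟩
    have hcomp : Tendsto (fun k => (f^[φ k] z₀).arg - (f^[φ k] w₀).arg) atTop (nhds 0) :=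
      hΔ.comp hφ.tendsto_atTop
    have := hlim.sub hcomp
    simpa using this
  · rintro ⟨φ, hφ, hlim⟩
    refine ⟨φ, hφ, ?_⟩
    have hcomp : Tendsto (fun k => (f^[φ k] z₀).arg - (f^[φ k] w₀).arg) atTop (nhds 0) :=
      hΔ.comp hφ.tendsto_atTop
    have := hlim.add hcomp
    simpa using this
end

section
/- Let f : ℍ → ℍ be holomorphic and let z₀ ∈ ℍ be such that |f^[n](z₀)| → ∞ and f^[n+1](z₀)/f^[n](z₀) → 1 as n → ∞. Then there exist real numbers a, b with 0 ≤ a ≤ b ≤ π such that Slope[f, z₀], the set of limit points of arg(f^[n](z₀)), equals the closed interval [a, b]. -/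
open Filter Topology

/-- Characterization of subsequential limits via frequently-close. -/
lemma subseq_limit_iff_freq (a : ℕ → ℝ) (s : ℝ) :
    (∃ φ : ℕ → ℕ, StrictMono φ ∧ Tendsto (fun k => a (φ k)) atTop (nhds s)) ↔
      ∀ ε > 0, ∃ᶠ n in atTop, |a n - s| < ε := by
  constructor
  · rintro ⟨φ, hφ, htend⟩ ε hε
    rw [Filter.frequently_atTop]
    intro N
    obtain ⟨K, hK⟩ := Metric.tendsto_atTop.1 htend ε hε
    refine ⟨φ (max N K), le_trans (le_max_left N K) (hφ.id_le _), ?_⟩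
    have := hK (max N K) (le_max_right N K)
    rwa [Real.dist_eq] at this
  · intro h
    obtain ⟨φ, hφ, hP⟩ := Filter.extraction_forall_of_frequently
      (fun n => h (1 / (n + 1)) (by positivity))
    refine ⟨φ, hφ, ?_⟩
    rw [Metric.tendsto_atTop]
    intro ε hε
    obtain ⟨N, hN⟩ := exists_nat_one_div_lt hε
    refine ⟨N, fun n hn => ?_⟩
    rw [Real.dist_eq]
    have h1 : (1 : ℝ) / (n + 1) ≤ 1 / (N + 1) := by
      apply one_div_le_one_div_of_le (by positivity)
      exact_mod_cast by omega
    calc |a (φ n) - s| < 1 / (n + 1) := hP n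
      _ ≤ 1 / (N + 1) := h1
      _ < ε := hN

/-- Crossing lemma: if consecutive differences tend to 0, any point between two
cluster values is a cluster value. -/
lemma freq_cluster {a : ℕ → ℝ}
    (hstep : Tendsto (fun n => a (n + 1) - a n) atTop (nhds 0))
    {p q c : ℝ} (hpc : p ≤ c) (hcq : c ≤ q)
    (hp : ∀ ε > 0, ∃ᶠ n in atTop, |a n - p| < ε)
    (hq : ∀ ε > 0, ∃ᶠ n in atTop, |a n - q| < ε) :
    ∀ ε > 0, ∃ᶠ n in atTop, |a n - c| < ε := by
  intro ε hε
  by_cases h1 : c < p + ε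
  · have hδ : 0 < ε - (c - p) := by linarith
    refine (hp _ hδ).mono fun n hn => ?_
    have h2 : |a n - c| ≤ |a n - p| + |p - c| := abs_sub_le _ _ _
    have h3 : |p - c| = c - p := by rw [abs_sub_comm]; exact abs_of_nonneg (by linarith)
    linarith
  · by_cases h2 : q < c + ε
    · have hδ : 0 < ε - (q - c) := by linarith
      refine (hq _ hδ).mono fun n hn => ?_
      have h3 : |a n - c| ≤ |a n - q| + |q - c| := abs_sub_le _ _ _
      have h4 : |q - c| = q - c := abs_of_nonneg (by linarith)
      linarith
    · push_neg at h1 h2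
      have hlt : ∃ᶠ n in atTop, a n < c := by
        refine (hp ε hε).mono fun n hn => ?_
        have := abs_lt.1 hn
        linarith [this.2]
      have hgt : ∃ᶠ n in atTop, c < a n := by
        refine (hq ε hε).mono fun n hn => ?_
        have := abs_lt.1 hn
        linarith [this.1]
      obtain ⟨M, hM⟩ := Filter.eventually_atTop.1
        (hstep.eventually (eventually_abs_sub_lt 0 hε))
      rw [Filter.frequently_atTop]
      intro N
      obtain ⟨m, hmN, hm⟩ := Filter.frequently_atTop.1 hlt (max N M)
      obtain ⟨m', hm'm, hm'⟩ := Filter.frequently_atTop.1 hgt (m + 1)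
      have hQex : ∃ j, c ≤ a (m + j) := ⟨m' - m, by
        have : m + (m' - m) = m' := by omega
        rw [this]; exact hm'.le⟩
      classical
      set j0 := Nat.find hQex with hj0
      have hj0P : c ≤ a (m + j0) := Nat.find_spec hQex
      have hj0ne : j0 ≠ 0 := by
        intro h
        rw [h] at hj0P
        simp at hj0P
        linarith
      obtain ⟨j1, hj1⟩ := Nat.exists_eq_succ_of_ne_zero hj0ne
      have hj1lt : a (m + j1) < c := by
        have := Nat.find_min hQex (by omega : j1 < j0)
        linarith [not_le.1 this]
      have hidx : m + j1 ≥ M := le_trans (le_max_right N M) (le_trans hmN (Nat.le_add_right _ _))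
      have hstepb : |a (m + j1 + 1) - a (m + j1)| < ε := by
        have := hM (m + j1) hidx
        rwa [sub_zero] at this
      refine ⟨m + j0, by omega, ?_⟩
      have heq : m + j0 = m + j1 + 1 := by omega
      rw [heq] at hj0P ⊢
      rw [abs_lt] at hstepb ⊢
      constructor <;> linarith [hstepb.1, hstepb.2]



/-- If `f` is a holomorphic self-map of the upper half-plane, `z₀` is a
point whose orbit tends to `∞` in modulus and satisfies `z_{n+1}/z_n → 1` (as is the
case for parabolic maps with Denjoy-Wolff point `∞`, by Pommerenke's theorem), then
`Slope[f, z₀]`, the set of limit points of `arg (f^[n] z₀)`, is a closed interval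
`[a, b]` with `0 ≤ a ≤ b ≤ π`. -/
theorem slope_set_eq_Icc (f : ℂ → ℂ)
    (hf : DifferentiableOn ℂ f {z : ℂ | 0 < z.im})
    (hmaps : Set.MapsTo f {z : ℂ | 0 < z.im} {z : ℂ | 0 < z.im})
    (z₀ : ℂ) (hz₀ : 0 < z₀.im)
    (habs : Tendsto (fun n => ‖f^[n] z₀‖) atTop atTop)
    (hratio : Tendsto (fun n => f^[n + 1] z₀ / f^[n] z₀) atTop (nhds 1)) :
    ∃ a b : ℝ, 0 ≤ a ∧ a ≤ b ∧ b ≤ Real.pi ∧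
      {s : ℝ | ∃ φ : ℕ → ℕ, StrictMono φ ∧
        Tendsto (fun k => (f^[φ k] z₀).arg) atTop (nhds s)} = Set.Icc a b := by
  classical
  set a : ℕ → ℝ := fun n => (f^[n] z₀).arg with ha
  -- imaginary parts stay positive
  have him : ∀ n, 0 < (f^[n] z₀).im := by
    intro n
    induction n with
    | zero => simpa using hz₀
    | succ n ih =>
      rw [Function.iterate_succ_apply']
      exact hmaps ih
  have hne : ∀ n, f^[n] z₀ ≠ 0 := by
    intro n h
    have := him n
    rw [h] at this
    simp at this
  -- arguments lie in (0, π)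
  have haIoo : ∀ n, a n ∈ Set.Ioo 0 Real.pi := by
    intro n
    have habs' : |(f^[n] z₀).re| < ‖f^[n] z₀‖ :=
      Complex.abs_re_lt_norm.2 (him n).ne'
    have habspos : 0 < ‖f^[n] z₀‖ := norm_pos_iff.mpr (hne n)
    have hx : |(f^[n] z₀).re / ‖f^[n] z₀‖| < 1 := by
      rw [abs_div, abs_of_pos habspos, div_lt_one habspos]
      exact habs'
    rw [abs_lt] at hx
    have harg : a n = Real.arccos ((f^[n] z₀).re / ‖f^[n] z₀‖) :=
      Complex.arg_of_im_pos (him n)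
    constructor
    · rw [harg]; exact Real.arccos_pos.2 hx.2
    · rw [harg, Real.arccos]
      have := Real.neg_pi_div_two_lt_arcsin.2 hx.1
      linarith
  -- arg of ratio tends to 0
  have hargr : Tendsto (fun n => (f^[n + 1] z₀ / f^[n] z₀).arg) atTop (nhds 0) := by
    have hc : ContinuousAt Complex.arg 1 := Complex.continuousAt_arg Complex.one_mem_slitPlane
    have := hc.tendsto.comp hratio
    rwa [Complex.arg_one] at this
  -- consecutive differences tend to 0
  have hstep : Tendsto (fun n => a (n + 1) - a n) atTop (nhds 0) := by
    have hev : ∀ᶠ n in atTop, |(f^[n + 1] z₀ / f^[n] z₀).arg| < Real.pi := by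
      have := hargr.eventually (eventually_abs_sub_lt 0 Real.pi_pos)
      simpa using this
    have heq : ∀ᶠ n in atTop, a (n + 1) - a n = (f^[n + 1] z₀ / f^[n] z₀).arg := by
      refine hev.mono fun n hn => ?_
      set r : ℂ := f^[n + 1] z₀ / f^[n] z₀ with hr
      have hrne : r ≠ 0 := div_ne_zero (hne (n + 1)) (hne n)
      have hmul : f^[n + 1] z₀ = f^[n] z₀ * r := by
        rw [hr, mul_div_cancel₀ _ (hne n)]
      have hangle : ((a (n + 1) : ℝ) : Real.Angle) = ((a n + r.arg : ℝ) : Real.Angle) := by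
        rw [ha]
        simp only
        rw [hmul, Real.Angle.coe_add]
        exact Complex.arg_mul_coe_angle (hne n) hrne
      obtain ⟨k, hk⟩ := Real.Angle.angle_eq_iff_two_pi_dvd_sub.1 hangle
      have hb1 := haIoo n
      have hb2 := haIoo (n + 1)
      have hkb : |(2 * Real.pi * k : ℝ)| < 2 * Real.pi := by
        rw [← hk]
        rw [abs_lt] at hn ⊢
        constructor <;>
          cases' hb1 with hb1a hb1b <;>
          cases' hb2 with hb2a hb2b <;>
          [skip; skip] <;> linarith [hn.1, hn.2]
      have hk0 : k = 0 := by
        by_contra hk0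
        have h1 : (1 : ℝ) ≤ |(k : ℝ)| := by
          have : (1 : ℤ) ≤ |k| := Int.one_le_abs hk0
          calc (1:ℝ) ≤ (|k| : ℤ) := by exact_mod_cast this
            _ = |(k : ℝ)| := by push_cast; rfl
        have h2 : 2 * Real.pi ≤ |(2 * Real.pi * k : ℝ)| := by
          rw [abs_mul, abs_of_pos (by positivity : (0:ℝ) < 2 * Real.pi)]
          nlinarith [Real.pi_pos]
        linarith
      rw [hk0] at hk
      push_cast at hk
      linarith
    exact Filter.Tendsto.congr' (Filter.EventuallyEq.symm heq) hargr
  -- the cluster set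
  set T : Set ℝ := {s : ℝ | ∃ φ : ℕ → ℕ, StrictMono φ ∧
      Tendsto (fun k => (f^[φ k] z₀).arg) atTop (nhds s)} with hT
  have hchar : ∀ s : ℝ, s ∈ T ↔ ∀ ε > 0, ∃ᶠ n in atTop, |a n - s| < ε := by
    intro s
    exact subseq_limit_iff_freq a s
  -- T is contained in [0, π]
  have hTsub : T ⊆ Set.Icc 0 Real.pi := by
    rintro s ⟨φ, hφ, htend⟩
    refine isClosed_Icc.mem_of_tendsto htend (Filter.Eventually.of_forall fun k => ?_)
    exact ⟨(haIoo (φ k)).1.le, (haIoo (φ k)).2.le⟩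
  -- T is nonempty
  have hTne : T.Nonempty := by
    obtain ⟨s, _, φ, hφ, htend⟩ := isCompact_Icc.tendsto_subseq
      (fun n => (Set.mem_Icc.2 ⟨(haIoo n).1.le, (haIoo n).2.le⟩ : a n ∈ Set.Icc 0 Real.pi))
    exact ⟨s, φ, hφ, htend⟩
  have hbdd : BddBelow T := ⟨0, fun s hs => (hTsub hs).1⟩
  have hbdd' : BddAbove T := ⟨Real.pi, fun s hs => (hTsub hs).2⟩
  set a0 := sInf T with ha0
  set b0 := sSup T with hb0
  -- a0 is a cluster value
  have ha0T : a0 ∈ T := by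
    rw [hchar]
    intro ε hε
    obtain ⟨t, htT, htlt⟩ := exists_lt_of_csInf_lt hTne
      (show sInf T < a0 + ε / 2 by linarith [hε])
    have hta0 : a0 ≤ t := csInf_le hbdd htT
    refine ((hchar t).1 htT (ε / 2) (by linarith)).mono fun n hn => ?_
    have h2 : |a n - a0| ≤ |a n - t| + |t - a0| := abs_sub_le _ _ _
    have h3 : |t - a0| = t - a0 := abs_of_nonneg (by linarith)
    linarith
  have hb0T : b0 ∈ T := by
    rw [hchar]
    intro ε hε
    obtain ⟨t, htT, htlt⟩ := exists_lt_of_lt_csSup hTne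
      (show b0 - ε / 2 < sSup T by linarith [hε])
    have htb0 : t ≤ b0 := le_csSup hbdd' htT
    refine ((hchar t).1 htT (ε / 2) (by linarith)).mono fun n hn => ?_
    have h2 : |a n - b0| ≤ |a n - t| + |t - b0| := abs_sub_le _ _ _
    have h3 : |t - b0| = b0 - t := by rw [abs_sub_comm]; exact abs_of_nonneg (by linarith)
    linarith
  refine ⟨a0, b0, (hTsub ha0T).1, csInf_le_csSup hTne hbdd hbdd', (hTsub hb0T).2, ?_⟩
  ext s
  constructor
  · intro hs
    exact ⟨csInf_le hbdd hs, le_csSup hbdd' hs⟩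
  · rintro ⟨hs1, hs2⟩
    rw [hchar]
    exact freq_cluster hstep hs1 hs2 ((hchar a0).1 ha0T) ((hchar b0).1 hb0T)
end

section
/- Let μ be a finite positive Borel measure on ℝ with ∫_ℝ |t| dμ(t) < ∞, and define p(z) = ∫_ℝ (1+t²)/(t−z) dμ(t) for z ∈ ℍ. Then p(z) → 0 as z → ∞ non-tangentially: for every δ ∈ (0, π/2) and every ε > 0 there exists R > 0 such that |p(z)| ≤ ε whenever z ∈ ℍ, |z| ≥ R and δ ≤ arg(z) ≤ π − δ. -/
open Filter Topology MeasureTheory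

private lemma sin_lower_aux {δ x : ℝ} (hδ : 0 < δ) (hδ2 : δ < Real.pi / 2)
    (h1 : δ ≤ x) (h2 : x ≤ Real.pi - δ) : Real.sin δ ≤ Real.sin x := by
  have hpi := Real.pi_pos
  rcases le_or_gt x (Real.pi / 2) with hx | hx
  · exact Real.strictMonoOn_sin.monotoneOn
      ⟨by linarith, hδ2.le⟩ ⟨by linarith, hx⟩ h1
  · rw [← Real.sin_pi_sub x]
    exact Real.strictMonoOn_sin.monotoneOn
      ⟨by linarith, hδ2.le⟩ ⟨by linarith, by linarith⟩ (by linarith)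

set_option maxHeartbeats 1000000 in
private lemma integral_tendsto_zero_nontangentially_aux (μ : Measure ℝ) [IsFiniteMeasure μ]
    (hμ : Integrable (fun t : ℝ => |t|) μ) :
    ∀ δ : ℝ, 0 < δ → δ < Real.pi / 2 → ∀ ε : ℝ, 0 < ε → ∃ R : ℝ, 0 < R ∧
      ∀ z : ℂ, 0 < z.im → R ≤ ‖z‖ → δ ≤ z.arg → z.arg ≤ Real.pi - δ →
        ‖∫ t : ℝ, (1 + (t : ℂ) ^ 2) / ((t : ℂ) - z) ∂μ‖ ≤ ε := by
  intro δ hδ hδ2 ε hε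
  set s : ℝ := Real.sin δ with hs_def
  have hs : 0 < s := Real.sin_pos_of_pos_of_lt_pi hδ (by linarith [Real.pi_pos])
  have hs1 : s ≤ 1 := Real.sin_le_one δ
  -- tail smallness
  have htail : Tendsto (fun n : ℕ => ∫ t in {t : ℝ | (n : ℝ) < |t|}, |t| ∂μ)
      atTop (𝓝 0) := by
    apply hμ.tendsto_setIntegral_nhds_zero
    have hmeas : ∀ n : ℕ, MeasurableSet {t : ℝ | (n : ℝ) < |t|} := fun n =>
      measurableSet_lt measurable_const (measurable_id.abs)
    have hI : (⋂ n : ℕ, {t : ℝ | (n : ℝ) < |t|}) = ∅ := by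
      ext t
      simp only [Set.mem_iInter, Set.mem_setOf_eq, Set.mem_empty_iff_false, iff_false,
        not_forall, not_lt]
      obtain ⟨n, hn⟩ := exists_nat_ge |t|
      exact ⟨n, hn⟩
    have := MeasureTheory.tendsto_measure_iInter_atTop (μ := μ)
      (s := fun n : ℕ => {t : ℝ | (n : ℝ) < |t|})
      (fun n => (hmeas n).nullMeasurableSet)
      (fun m n hmn t ht => by
        simp only [Set.mem_setOf_eq] at ht ⊢
        exact lt_of_le_of_lt (by exact_mod_cast hmn) ht)
      ⟨0, measure_ne_top μ _⟩
    rwa [hI, measure_empty] at this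
  obtain ⟨N, hN⟩ := (htail.eventually (eventually_le_nhds
    (show (0:ℝ) < ε * s / 8 by positivity))).exists_forall_of_atTop
  set A : ℝ := ((max N 1 : ℕ) : ℝ) with hA_def
  have hA1 : (1 : ℝ) ≤ A := by rw [hA_def]; exact_mod_cast le_max_right N 1
  have hSmeas : MeasurableSet {t : ℝ | A < |t|} :=
    measurableSet_lt measurable_const (measurable_id.abs)
  have htailA : ∫ t in {t : ℝ | A < |t|}, |t| ∂μ ≤ ε * s / 8 :=
    hN (max N 1) (le_max_left _ _)
  set M : ℝ := (μ Set.univ).toReal with hM_def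
  have hM0 : 0 ≤ M := ENNReal.toReal_nonneg
  set R : ℝ := max 1 (2 * (1 + A ^ 2) * M / (ε * s)) with hR_def
  have hR1 : (1 : ℝ) ≤ R := le_max_left _ _
  have hRge0 : 2 * (1 + A ^ 2) * M / (ε * s) ≤ R := le_max_right _ _
  refine ⟨R, by linarith, ?_⟩
  intro z him habs harg1 harg2
  have hzabs : (0 : ℝ) < ‖z‖ := lt_of_lt_of_le (by linarith) habs
  -- Im z ≥ s * |z|
  have himz : s * ‖z‖ ≤ z.im := by
    rw [← Complex.norm_mul_sin_arg z, hs_def]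
    have h1 := sin_lower_aux hδ hδ2 harg1 harg2
    nlinarith [norm_nonneg z]
  -- pointwise bounds
  have hdist : ∀ t : ℝ, s * ‖z‖ ≤ ‖(t : ℂ) - z‖ := by
    intro t
    calc s * ‖z‖ ≤ z.im := himz
    _ = |((t : ℂ) - z).im| := by simp [abs_of_nonneg him.le]
    _ ≤ ‖(t : ℂ) - z‖ := Complex.abs_im_le_norm _
  have hdist_pos : ∀ t : ℝ, (0 : ℝ) < ‖(t : ℂ) - z‖ := fun t =>
    lt_of_lt_of_le (by positivity) (hdist t)
  have hnorm : ∀ t : ℝ, ‖(1 + (t : ℂ) ^ 2) / ((t : ℂ) - z)‖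
      = (1 + t ^ 2) / ‖(t : ℂ) - z‖ := by
    intro t
    rw [norm_div]
    congr 1
    have : (1 + (t : ℂ) ^ 2) = ((1 + t ^ 2 : ℝ) : ℂ) := by push_cast; ring
    rw [this, Complex.norm_real, Real.norm_eq_abs, abs_of_nonneg (by positivity)]
  -- bound for |t| > A: (1+t²)/|t-z| ≤ (4/s)|t|
  have hbig : ∀ t : ℝ, A < |t| →
      (1 + t ^ 2) / ‖(t : ℂ) - z‖ ≤ 4 / s * |t| := by
    intro t ht
    have ht1 : (1 : ℝ) ≤ |t| := le_trans hA1 ht.le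
    have h1t : 1 + t ^ 2 ≤ 2 * t ^ 2 := by nlinarith [sq_abs t]
    have htz : |t| * s / 2 ≤ ‖(t : ℂ) - z‖ := by
      rcases le_or_gt (|t|) (2 * ‖z‖) with h | h
      · calc |t| * s / 2 ≤ s * ‖z‖ := by nlinarith
        _ ≤ _ := hdist t
      · have h2 : |t| - ‖z‖ ≤ ‖(t:ℂ) - z‖ := by
          have h3 := norm_sub_norm_le ((t : ℂ)) z
          simpa [Complex.norm_real] using h3
        nlinarith [abs_nonneg t]
    rw [div_le_iff₀ (hdist_pos t)]
    have hu : 4 / s * (|t| * s / 2) = 2 * |t| := by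
      field_simp; ring
    calc (1 + t ^ 2) ≤ 2 * t ^ 2 := h1t
    _ = (2 * |t|) * |t| := by rw [← sq_abs]; ring
    _ = (4 / s * (|t| * s / 2)) * |t| := by rw [hu]
    _ ≤ (4 / s * ‖(t:ℂ) - z‖) * |t| := by
        exact mul_le_mul_of_nonneg_right
          (mul_le_mul_of_nonneg_left htz (by positivity)) (abs_nonneg t)
    _ = 4 / s * |t| * ‖(t:ℂ) - z‖ := by ring
  -- dominating function
  set C1 : ℝ := (1 + A ^ 2) / (R * s) with hC1_def
  have hC1 : 0 ≤ C1 := by positivity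
  set g : ℝ → ℝ := fun t => C1 + 4 / s * ({t : ℝ | A < |t|}.indicator (fun t => |t|) t)
    with hg_def
  have hgint : Integrable g μ :=
    (integrable_const C1).add (((hμ.indicator hSmeas)).const_mul (4 / s))
  clear_value g C1 R M A s
  have hptwise : ∀ t : ℝ, ‖(1 + (t : ℂ) ^ 2) / ((t : ℂ) - z)‖ ≤ g t := by
    intro t
    rw [hnorm t]
    rcases le_or_gt (|t|) A with h | h
    · have hind : {t : ℝ | A < |t|}.indicator (fun t => |t|) t = 0 := by
        apply Set.indicator_of_notMem
        simpa using not_lt.mpr h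
      have hb : (1 + t ^ 2) / ‖(t : ℂ) - z‖ ≤ C1 := by
        rw [div_le_iff₀ (hdist_pos t), hC1_def]
        have h1 : 1 + t ^ 2 ≤ 1 + A ^ 2 := by nlinarith [sq_abs t, abs_nonneg t]
        have h2 : R * s ≤ ‖(t:ℂ) - z‖ :=
          le_trans (by rw [mul_comm]; exact mul_le_mul_of_nonneg_left habs hs.le)
            (hdist t)
        have h3 : (1 + A ^ 2) / (R * s) * (R * s) = 1 + A ^ 2 := by
          field_simp
        calc 1 + t ^ 2 ≤ 1 + A ^ 2 := h1
        _ = (1 + A ^ 2) / (R * s) * (R * s) := h3.symm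
        _ ≤ _ := by apply mul_le_mul_of_nonneg_left h2 (by positivity)
      simp only [hg_def, hind, mul_zero, add_zero]
      exact hb
    · have hind : {t : ℝ | A < |t|}.indicator (fun t => |t|) t = |t| := by
        simp only [Set.indicator_apply]
        rw [if_pos (show t ∈ {t : ℝ | A < |t|} from h)]
      simp only [hg_def, hind]
      calc (1 + t ^ 2) / ‖(t : ℂ) - z‖ ≤ 4 / s * |t| := hbig t h
      _ ≤ C1 + 4 / s * |t| := by linarith
  -- main estimate
  have hle : ‖∫ t : ℝ, (1 + (t : ℂ) ^ 2) / ((t : ℂ) - z) ∂μ‖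
      ≤ ∫ t : ℝ, g t ∂μ := by
    refine le_trans (norm_integral_le_integral_norm _) ?_
    exact integral_mono_of_nonneg (ae_of_all _ fun t => norm_nonneg _) hgint
      (ae_of_all _ hptwise)
  have hgval : ∫ t : ℝ, g t ∂μ
      = C1 * M + 4 / s * ∫ t in {t : ℝ | A < |t|}, |t| ∂μ := by
    rw [hg_def]
    rw [integral_add (integrable_const C1) ((hμ.indicator hSmeas).const_mul (4 / s)),
      integral_const, integral_const_mul, integral_indicator hSmeas]
    rw [smul_eq_mul, measureReal_def, ← hM_def]
    ring
  -- final bounds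
  have hb1 : C1 * M ≤ ε / 2 := by
    have hRge := hRge0
    rcases eq_or_lt_of_le hM0 with hM | hM
    · rw [← hM]; simp; positivity
    · have h1 : 2 * (1 + A ^ 2) * M ≤ R * (ε * s) :=
        (div_le_iff₀ (by positivity)).mp hRge
      have h2 : (0:ℝ) < R * s := by positivity
      rw [hC1_def, div_mul_eq_mul_div, div_le_iff₀ h2]
      nlinarith [h1]
  have hb2 : 4 / s * ∫ t in {t : ℝ | A < |t|}, |t| ∂μ ≤ ε / 2 := by
    have h4s : 4 / s * (ε * s / 8) = ε / 2 := by field_simp; ring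
    calc 4 / s * ∫ t in {t : ℝ | A < |t|}, |t| ∂μ ≤ 4 / s * (ε * s / 8) :=
      mul_le_mul_of_nonneg_left htailA (by positivity)
    _ = ε / 2 := h4s
  calc ‖∫ t : ℝ, (1 + (t : ℂ) ^ 2) / ((t : ℂ) - z) ∂μ‖
      ≤ ∫ t : ℝ, g t ∂μ := hle
  _ = C1 * M + 4 / s * ∫ t in {t : ℝ | A < |t|}, |t| ∂μ := hgval
  _ ≤ ε / 2 + ε / 2 := add_le_add hb1 hb2
  _ = ε := by ring


/-- If `μ` is a finite positive Borel measure on `ℝ` with `∫ |t| dμ < ∞`,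
then `p(z) = ∫ (1+t²)/(t-z) dμ(t)` tends to `0` as `z → ∞` non-tangentially in the
upper half-plane. -/
theorem integral_tendsto_zero_nontangentially (μ : Measure ℝ) [IsFiniteMeasure μ]
    (hμ : Integrable (fun t : ℝ => |t|) μ) :
    ∀ δ : ℝ, 0 < δ → δ < Real.pi / 2 → ∀ ε : ℝ, 0 < ε → ∃ R : ℝ, 0 < R ∧
      ∀ z : ℂ, 0 < z.im → R ≤ ‖z‖ → δ ≤ z.arg → z.arg ≤ Real.pi - δ →
        ‖∫ t : ℝ, (1 + (t : ℂ) ^ 2) / ((t : ℂ) - z) ∂μ‖ ≤ ε := by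
  exact integral_tendsto_zero_nontangentially_aux μ hμ
end

section
/- Let μ be a finite positive Borel measure on ℝ with ∫_ℝ t² dμ(t) < ∞, and define p(z) = ∫_ℝ (1+t²)/(t−z) dμ(t) for z ∈ ℍ. Then z·p(z) → −∫_ℝ (1+t²) dμ(t) as z → ∞ non-tangentially: for every δ ∈ (0, π/2) and every ε > 0 there exists R > 0 such that |z·p(z) + ∫_ℝ (1+t²) dμ(t)| ≤ ε whenever z ∈ ℍ, |z| ≥ R and δ ≤ arg(z) ≤ π − δ. -/
open Filter Topology MeasureTheory

set_option maxHeartbeats 1600000 in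
/-- If `μ` is a finite positive Borel measure on `ℝ` with `∫ t² dμ < ∞`,
then `z·p(z) → -∫ (1+t²) dμ(t)` as `z → ∞` non-tangentially in the upper half-plane,
where `p(z) = ∫ (1+t²)/(t-z) dμ(t)`. -/
theorem mul_integral_tendsto_nontangentially (μ : Measure ℝ) [IsFiniteMeasure μ]
    (hμ : Integrable (fun t : ℝ => t ^ 2) μ) :
    ∀ δ : ℝ, 0 < δ → δ < Real.pi / 2 → ∀ ε : ℝ, 0 < ε → ∃ R : ℝ, 0 < R ∧
      ∀ z : ℂ, 0 < z.im → R ≤ ‖z‖ → δ ≤ z.arg → z.arg ≤ Real.pi - δ →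
        ‖z * (∫ t : ℝ, (1 + (t : ℂ) ^ 2) / ((t : ℂ) - z) ∂μ) +
          ((∫ t : ℝ, (1 + t ^ 2) ∂μ : ℝ) : ℂ)‖ ≤ ε := by
  intro δ hδ0 hδπ ε hε
  have hπ := Real.pi_pos
  set s := Real.sin δ with hs_def
  have hs0 : 0 < s := Real.sin_pos_of_pos_of_lt_pi hδ0 (by linarith)
  have hs1 : s ≤ 1 := Real.sin_le_one δ
  have hint : Integrable (fun t : ℝ => 1 + t ^ 2) μ := (integrable_const 1).add hμ
  -- measurable sets {t | c < |t|}
  have hSmeas : ∀ c : ℝ, MeasurableSet {t : ℝ | c < |t|} := fun c =>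
    (isOpen_lt continuous_const continuous_abs).measurableSet
  -- tail integrals tend to 0
  have htail : Tendsto (fun n : ℕ =>
      ∫ t, Set.indicator {t : ℝ | (n : ℝ) < |t|} (fun t => 1 + t ^ 2) t ∂μ) atTop (𝓝 0) := by
    have h0 : (0 : ℝ) = ∫ t : ℝ, (0 : ℝ) ∂μ := by simp
    rw [h0]
    apply tendsto_integral_of_dominated_convergence (fun t => 1 + t ^ 2)
    · intro n
      exact hint.aestronglyMeasurable.indicator (hSmeas _)
    · exact hint
    · intro n
      filter_upwards with t
      by_cases ht : t ∈ {t : ℝ | (n : ℝ) < |t|}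
      · rw [Set.indicator_of_mem ht]
        simp only [Real.norm_eq_abs]
        rw [abs_of_nonneg (by positivity)]
      · rw [Set.indicator_of_notMem ht]
        simp only [norm_zero]
        positivity
    · filter_upwards with t
      apply Tendsto.congr' _ tendsto_const_nhds
      filter_upwards [eventually_ge_atTop ⌈|t|⌉₊] with n hn
      rw [Set.indicator_of_notMem]
      simp only [Set.mem_setOf_eq, not_lt]
      exact le_trans (Nat.le_ceil _) (by exact_mod_cast hn)
  obtain ⟨T, hT⟩ : ∃ T : ℕ,
      ∫ t, Set.indicator {t : ℝ | (T : ℝ) < |t|} (fun t => 1 + t ^ 2) t ∂μ ≤ ε * s / 4 := by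
    have := (htail.eventually (gt_mem_nhds (show (0:ℝ) < ε * s / 4 by positivity))).exists
    obtain ⟨n, hn⟩ := this
    exact ⟨n, hn.le⟩
  set C : ℝ := (T : ℝ) * (1 + (T : ℝ) ^ 2) * (μ Set.univ).toReal with hC_def
  have hC0 : 0 ≤ C := by positivity
  refine ⟨max 1 (2 * C / (s * ε) + 1), lt_of_lt_of_le one_pos (le_max_left _ _), ?_⟩
  set R : ℝ := max 1 (2 * C / (s * ε) + 1) with hR_def
  clear_value R
  have hR1 : 1 ≤ R := hR_def ▸ le_max_left _ _
  have hR2 : 2 * C / (s * ε) ≤ R :=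
    le_trans (by linarith) (hR_def ▸ le_max_right 1 (2 * C / (s * ε) + 1))
  intro z hzim hzR hargl hargu
  have hz0 : z ≠ 0 := fun h => by simp [h] at hzim
  have habs0 : 0 < ‖z‖ := lt_of_lt_of_le (by linarith) hzR
  -- sin (arg z) ≥ s
  have hsin : s ≤ Real.sin z.arg := by
    rcases le_or_gt z.arg (Real.pi / 2) with h | h
    · exact Real.sin_le_sin_of_le_of_le_pi_div_two (by linarith) h hargl
    · rw [← Real.sin_pi_sub]
      exact Real.sin_le_sin_of_le_of_le_pi_div_two (by linarith) (by linarith) (by linarith)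
  -- Im z ≥ s * |z|
  have him : s * ‖z‖ ≤ z.im := by
    have := Complex.sin_arg z
    have h2 : z.im = ‖z‖ * Real.sin z.arg := by
      rw [this]; field_simp
    rw [h2]
    exact mul_le_mul_of_nonneg_right hsin (le_of_lt habs0) |>.trans_eq (mul_comm _ _)
  -- denominator bounds
  have hden : ∀ t : ℝ, z.im ≤ ‖(t : ℂ) - z‖ := by
    intro t
    have := Complex.abs_im_le_norm ((t : ℂ) - z)
    simp only [Complex.sub_im, Complex.ofReal_im, zero_sub, abs_neg] at this
    exact le_trans (le_abs_self _) this
  have hdenpos : ∀ t : ℝ, 0 < ‖(t : ℂ) - z‖ := fun t => lt_of_lt_of_le hzim (hden t)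
  have hne : ∀ t : ℝ, (t : ℂ) - z ≠ 0 := by
    intro t h
    have := hdenpos t
    rw [h] at this
    simp at this
  have hden2 : ∀ t : ℝ, s * |t| / 2 ≤ ‖(t : ℂ) - z‖ := by
    intro t
    rcases le_or_gt (|t|) (2 * ‖z‖) with h | h
    · calc s * |t| / 2 ≤ s * ‖z‖ := by nlinarith [hs0.le, abs_nonneg t]
        _ ≤ z.im := him
        _ ≤ _ := hden t
    · have h1 : |t| - ‖z‖ ≤ ‖(t : ℂ) - z‖ := by
        have h2 := norm_sub_norm_le ((t : ℂ)) z
        simp only [Complex.norm_real, Real.norm_eq_abs] at h2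
        exact h2
      nlinarith [abs_nonneg t]
  -- norms of the integrands
  have hnorm : ∀ t : ℝ, ‖(t : ℂ) * (1 + (t : ℂ) ^ 2) / ((t : ℂ) - z)‖
      = |t| * (1 + t ^ 2) / ‖(t : ℂ) - z‖ := by
    intro t
    have h1 : (1 : ℂ) + (t : ℂ) ^ 2 = ((1 + t ^ 2 : ℝ) : ℂ) := by push_cast; ring
    rw [norm_div, norm_mul, h1, Complex.norm_real, Complex.norm_real, Real.norm_eq_abs, Real.norm_eq_abs,
      abs_of_nonneg (show (0:ℝ) ≤ 1 + t ^ 2 by positivity)]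
  have hc1 : Continuous fun t : ℝ => (1:ℂ) + (t:ℂ) ^ 2 :=
    continuous_const.add (Complex.continuous_ofReal.pow 2)
  have hc2 : Continuous fun t : ℝ => (t:ℂ) - z := Complex.continuous_ofReal.sub continuous_const
  -- the main pointwise bound away from the real axis
  have hkey2 : ∀ t : ℝ, |t| * (1 + t ^ 2) / ‖(t:ℂ) - z‖ ≤ 2 / s * (1 + t ^ 2) := by
    intro t
    rw [div_le_iff₀ (hdenpos t), div_mul_eq_mul_div, div_mul_eq_mul_div, le_div_iff₀ hs0]
    nlinarith [mul_le_mul_of_nonneg_left (hden2 t) (show (0:ℝ) ≤ 1 + t ^ 2 by positivity)]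
  -- integrability of g
  have hg : Integrable (fun t : ℝ => (t : ℂ) * (1 + (t : ℂ) ^ 2) / ((t : ℂ) - z)) μ := by
    apply Integrable.mono' ((hint.const_mul (2 / s)))
    · exact ((Complex.continuous_ofReal.mul hc1).div hc2 hne).aestronglyMeasurable
    · filter_upwards with t
      rw [hnorm t]
      exact hkey2 t
  -- integrability of f
  have hf : Integrable (fun t : ℝ => (1 + (t : ℂ) ^ 2) / ((t : ℂ) - z)) μ := by
    apply Integrable.mono' (hint.div_const z.im)
    · exact (hc1.div hc2 hne).aestronglyMeasurable
    · filter_upwards with t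
      have h1 : (1 : ℂ) + (t : ℂ) ^ 2 = ((1 + t ^ 2 : ℝ) : ℂ) := by push_cast; ring
      rw [norm_div, h1, Complex.norm_real, Real.norm_eq_abs,
        abs_of_nonneg (show (0:ℝ) ≤ 1 + t ^ 2 by positivity)]
      apply div_le_div_of_nonneg_left (by positivity) hzim (hden t)
  -- the key algebraic identity and integral identity
  have hkey : z * (∫ t : ℝ, (1 + (t : ℂ) ^ 2) / ((t : ℂ) - z) ∂μ) +
      ((∫ t : ℝ, (1 + t ^ 2) ∂μ : ℝ) : ℂ) =
      ∫ t : ℝ, (t : ℂ) * (1 + (t : ℂ) ^ 2) / ((t : ℂ) - z) ∂μ := by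
    have hcast : ((∫ t : ℝ, (1 + t ^ 2) ∂μ : ℝ) : ℂ) = ∫ t : ℝ, ((1:ℂ) + (t:ℂ) ^ 2) ∂μ := by
      have h5 : (∫ t : ℝ, (((1 + t ^ 2 : ℝ)) : ℂ) ∂μ) = ((∫ t : ℝ, (1 + t ^ 2) ∂μ : ℝ) : ℂ) :=
        integral_ofReal
      rw [← h5]
      congr 1
      ext t
      push_cast
      ring
    rw [hcast, ← integral_const_mul, ← integral_add (hf.const_mul z) (by
      have : Integrable (fun t : ℝ => (((1 + t ^ 2 : ℝ)) : ℂ)) μ := hint.ofReal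
      apply this.congr
      filter_upwards with t
      push_cast
      ring)]
    congr 1
    ext t
    have h := hne t
    field_simp
    ring
  rw [hkey]
  -- bound the integral
  have hbound : ∀ t : ℝ, ‖(t : ℂ) * (1 + (t : ℂ) ^ 2) / ((t : ℂ) - z)‖ ≤
      Set.indicator {t : ℝ | (T : ℝ) < |t|} (fun t => 2 / s * (1 + t ^ 2)) t
        + (T : ℝ) * (1 + (T : ℝ) ^ 2) / (s * R) := by
    intro t
    rw [hnorm t]
    by_cases ht : t ∈ {t : ℝ | (T : ℝ) < |t|}
    · rw [Set.indicator_of_mem ht]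
      have h2 := hkey2 t
      have h3 : (0:ℝ) ≤ (T : ℝ) * (1 + (T : ℝ) ^ 2) / (s * R) := by positivity
      linarith
    · rw [Set.indicator_of_notMem ht]
      simp only [Set.mem_setOf_eq, not_lt] at ht
      rw [zero_add]
      apply div_le_div₀ (by positivity)
      · have ht2 : t ^ 2 ≤ (T : ℝ) ^ 2 := by
          rw [← sq_abs]
          exact pow_le_pow_left₀ (abs_nonneg t) ht 2
        nlinarith [abs_nonneg t]
      · positivity
      · calc s * R ≤ s * ‖z‖ := mul_le_mul_of_nonneg_left hzR hs0.le
          _ ≤ z.im := him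
          _ ≤ _ := hden t
  calc ‖∫ t : ℝ, (t : ℂ) * (1 + (t : ℂ) ^ 2) / ((t : ℂ) - z) ∂μ‖
      ≤ ∫ t : ℝ, ‖(t : ℂ) * (1 + (t : ℂ) ^ 2) / ((t : ℂ) - z)‖ ∂μ :=
        by exact norm_integral_le_integral_norm _
    _ ≤ ∫ t : ℝ, (Set.indicator {t : ℝ | (T : ℝ) < |t|} (fun t => 2 / s * (1 + t ^ 2)) t
        + (T : ℝ) * (1 + (T : ℝ) ^ 2) / (s * R)) ∂μ := by
        apply integral_mono hg.norm
        · exact (((hint.const_mul (2/s)).indicator (hSmeas _)).add (integrable_const _))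
        · exact hbound
    _ ≤ ε := by
        rw [integral_add ((hint.const_mul (2/s)).indicator (hSmeas _)) (integrable_const _),
          integral_indicator (hSmeas _), integral_const]
        have e1 : ∫ t in {t : ℝ | (T : ℝ) < |t|}, 2 / s * (1 + t ^ 2) ∂μ
            = 2 / s * ∫ t in {t : ℝ | (T : ℝ) < |t|}, (1 + t ^ 2) ∂μ := integral_const_mul _ _
        rw [e1]
        rw [← integral_indicator (hSmeas _)]
        have h1 : 2 / s * ∫ t, Set.indicator {t : ℝ | (T : ℝ) < |t|} (fun t => 1 + t ^ 2) t ∂μ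
            ≤ 2 / s * (ε * s / 4) := by
          apply mul_le_mul_of_nonneg_left hT (by positivity)
        have h2 : 2 / s * (ε * s / 4) = ε / 2 := by field_simp; ring
        have h3 : μ.real Set.univ • ((T : ℝ) * (1 + (T : ℝ) ^ 2) / (s * R)) = C / (s * R) := by
          rw [smul_eq_mul, hC_def, Measure.real]; ring
        rw [h3]
        have h4 : C / (s * R) ≤ ε / 2 := by
          have hse : (0:ℝ) < s * ε := mul_pos hs0 hε
          have hsR : (0:ℝ) < s * R := mul_pos hs0 (lt_of_lt_of_le one_pos hR1)
          have h5 : 2 * C ≤ R * (s * ε) := (div_le_iff₀ hse).mp hR2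
          rw [div_le_iff₀ hsR]
          have h6 : ε / 2 * (s * R) = R * (s * ε) / 2 := by ring
          linarith
        linarith
end

section
/- Let μ be a finite positive Borel measure on ℝ with ∫_ℝ |t| dμ(t) < ∞, and define p(z) = ∫_ℝ (1+t²)/(t−z) dμ(t) for z ∈ ℍ. Then for every L > 0, p(z)/z → 0 as z → ∞ in the half-plane {Im z > L}: for every ε > 0 there exists R > 0 such that |p(z)/z| ≤ ε whenever z ∈ ℍ, |z| ≥ R and Im(z) > L. -/
open Filter Topology MeasureTheory

lemma pointwise_bound_aux (L M : ℝ) (hL : 0 < L) (hM : 1 ≤ M) (z : ℂ) (hzim : L < z.im)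
    (hzM : 2 * M ≤ ‖z‖) (t : ℝ) :
    ‖(1 + (t : ℂ) ^ 2) / ((t : ℂ) - z)‖ ≤
      2 * (1 + |t|) +
        (6 * ‖z‖ / L) * Set.indicator {t : ℝ | M ≤ |t|} (fun t => |t|) t := by
  set az := ‖z‖ with hazdef
  have haz2 : 2 ≤ az := by linarith
  have haz0 : 0 < az := by linarith
  have hnum : ‖1 + (t : ℂ) ^ 2‖ = 1 + t ^ 2 := by
    have h : (1 + (t : ℂ) ^ 2) = ((1 + t ^ 2 : ℝ) : ℂ) := by push_cast; ring
    rw [h, Complex.norm_real, Real.norm_eq_abs, abs_of_nonneg (by positivity)]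
  have habt : ‖(t : ℂ)‖ = |t| := Complex.norm_real t
  have hdenL : L ≤ ‖(t : ℂ) - z‖ := by
    have h1 : |((t : ℂ) - z).im| ≤ ‖(t : ℂ) - z‖ := Complex.abs_im_le_norm _
    have h2 : ((t : ℂ) - z).im = -z.im := by simp
    rw [h2, abs_neg, abs_of_pos (lt_trans hL hzim)] at h1
    linarith
  have hdpos : 0 < ‖(t : ℂ) - z‖ := lt_of_lt_of_le hL hdenL
  rw [norm_div, hnum]
  have hind0 : 0 ≤ Set.indicator {t : ℝ | M ≤ |t|} (fun t => |t|) t :=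
    Set.indicator_nonneg (fun t _ => abs_nonneg t) t
  have ht2 : t ^ 2 = |t| * |t| := by rw [← sq_abs]; ring
  rcases le_or_gt (|t|) (az / 2) with hc1 | hc1
  · -- |t| ≤ az/2
    have hden : az / 2 ≤ ‖(t : ℂ) - z‖ := by
      have h : az - |t| ≤ ‖(t : ℂ) - z‖ := by
        have h' := norm_sub_norm_le z (t : ℂ)
        rw [norm_sub_rev] at h'
        simpa [habt] using h'
      linarith
    have hnum2 : 1 + t ^ 2 ≤ (az / 2) * (1 + |t|) := by nlinarith [abs_nonneg t]
    calc (1 + t ^ 2) / ‖(t : ℂ) - z‖ ≤ ((az / 2) * (1 + |t|)) / (az / 2) := by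
          apply div_le_div₀ (by positivity) hnum2 (by linarith) hden
      _ = 1 + |t| := by field_simp
      _ ≤ 2 * (1 + |t|) + (6 * az / L) * Set.indicator {t : ℝ | M ≤ |t|} (fun t => |t|) t := by
          have := mul_nonneg (by positivity : (0:ℝ) ≤ 6 * az / L) hind0
          nlinarith [abs_nonneg t]
  rcases le_or_gt (2 * az) (|t|) with hc2 | hc2
  · -- |t| ≥ 2 az
    have ht1 : 1 ≤ |t| := by linarith
    have hden : |t| / 2 ≤ ‖(t : ℂ) - z‖ := by
      have h : |t| - az ≤ ‖(t : ℂ) - z‖ := by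
        have h' := norm_sub_norm_le (t : ℂ) z
        simpa [habt] using h'
      linarith
    have hnum2 : 1 + t ^ 2 ≤ |t| * (1 + |t|) := by nlinarith
    calc (1 + t ^ 2) / ‖(t : ℂ) - z‖ ≤ (|t| * (1 + |t|)) / (|t| / 2) := by
          apply div_le_div₀ (by positivity) hnum2 (by linarith) hden
      _ = 2 * (1 + |t|) := by field_simp
      _ ≤ 2 * (1 + |t|) + (6 * az / L) * Set.indicator {t : ℝ | M ≤ |t|} (fun t => |t|) t := by
          have := mul_nonneg (by positivity : (0:ℝ) ≤ 6 * az / L) hind0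
          nlinarith
  · -- middle case: az/2 < |t| < 2 az
    have ht1 : 1 ≤ |t| := by linarith
    have hmem : t ∈ {t : ℝ | M ≤ |t|} := by
      simp only [Set.mem_setOf_eq]; linarith
    rw [Set.indicator_of_mem hmem]
    have hnum2 : 1 + t ^ 2 ≤ 3 * az * |t| := by nlinarith
    calc (1 + t ^ 2) / ‖(t : ℂ) - z‖ ≤ (1 + t ^ 2) / L := by gcongr
      _ ≤ (3 * az * |t|) / L := by gcongr
      _ ≤ 2 * (1 + |t|) + (6 * az / L) * |t| := by
          have h6 : 6 * az / L * |t| = 2 * ((3 * az * |t|) / L) := by ring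
          have h0 : 0 ≤ (3 * az * |t|) / L := by positivity
          have habs : 0 ≤ |t| := abs_nonneg t
          linarith

/-- If `μ` is a finite positive Borel measure on `ℝ` with `∫ |t| dμ < ∞`
and `p(z) = ∫ (1+t²)/(t-z) dμ(t)`, then for every `L > 0`, `p(z)/z → 0` as `z → ∞` in
the half-plane `{Im z > L}`. -/
theorem integral_div_tendsto_zero_in_halfplane (μ : Measure ℝ) [IsFiniteMeasure μ]
    (hμ : Integrable (fun t : ℝ => |t|) μ) :
    ∀ L : ℝ, 0 < L → ∀ ε : ℝ, 0 < ε → ∃ R : ℝ, 0 < R ∧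
      ∀ z : ℂ, L < z.im → R ≤ ‖z‖ →
        ‖(∫ t : ℝ, (1 + (t : ℂ) ^ 2) / ((t : ℂ) - z) ∂μ) / z‖ ≤ ε := by
  intro L hL ε hε
  set A := ∫ t, |t| ∂μ with hAdef
  have hA0 : 0 ≤ A := integral_nonneg fun t => abs_nonneg t
  set m := (μ Set.univ).toReal with hmdef
  have hm0 : 0 ≤ m := ENNReal.toReal_nonneg
  have hmeas : ∀ M : ℝ, MeasurableSet {t : ℝ | M ≤ |t|} := fun M =>
    measurableSet_le measurable_const measurable_id.abs
  -- tail estimate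
  have htail : Tendsto (fun n : ℕ => ∫ t in {t : ℝ | (n : ℝ) ≤ |t|}, |t| ∂μ) atTop (𝓝 0) := by
    have h := MeasureTheory.tendsto_integral_of_dominated_convergence
      (F := fun n : ℕ => fun t : ℝ => Set.indicator {t : ℝ | (n : ℝ) ≤ |t|} (fun t => |t|) t)
      (f := fun _ : ℝ => (0 : ℝ)) (bound := fun t => |t|)
      (fun n => hμ.aestronglyMeasurable.indicator (hmeas _))
      hμ
      (fun n => Filter.Eventually.of_forall fun t => by
        show ‖Set.indicator {t : ℝ | (n : ℝ) ≤ |t|} (fun t => |t|) t‖ ≤ |t|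
        by_cases ht : t ∈ {t : ℝ | (n : ℝ) ≤ |t|}
        · rw [Set.indicator_of_mem ht]; simp
        · rw [Set.indicator_of_notMem ht]; simp)
      (Filter.Eventually.of_forall fun t => by
        apply Tendsto.congr' _ tendsto_const_nhds
        filter_upwards [eventually_gt_atTop ⌈|t|⌉₊] with n hn
        rw [Set.indicator_of_notMem]
        simp only [Set.mem_setOf_eq, not_le]
        calc |t| ≤ (⌈|t|⌉₊ : ℝ) := Nat.le_ceil _
          _ < (n : ℝ) := by exact_mod_cast hn)
    simp only [integral_zero] at h
    apply h.congr
    intro n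
    rw [integral_indicator (hmeas _)]
  have hsmall : ∀ᶠ n : ℕ in atTop,
      (∫ t in {t : ℝ | (n : ℝ) ≤ |t|}, |t| ∂μ) < ε * L / 12 := by
    apply htail.eventually_lt_const
    positivity
  obtain ⟨n, hn1, hnT⟩ := (eventually_ge_atTop 1).and hsmall |>.exists
  set M : ℝ := (n : ℝ) with hMdef
  have hM1 : 1 ≤ M := by rw [hMdef]; exact_mod_cast hn1
  set T := ∫ t in {t : ℝ | M ≤ |t|}, |t| ∂μ with hTdef
  have hT0 : 0 ≤ T := setIntegral_nonneg (hmeas M) fun t _ => abs_nonneg t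
  have hMtail : (6 / L) * T ≤ ε / 2 := by
    have h1 : T < ε * L / 12 := hnT
    rw [div_mul_eq_mul_div, div_le_iff₀ hL]
    nlinarith
  refine ⟨max (2 * M) (4 * (m + A + 1) / ε), lt_of_lt_of_le (by linarith) (le_max_left _ _), ?_⟩
  intro z hLz hRz
  set az := ‖z‖ with hazdef
  have hazM : 2 * M ≤ az := le_trans (le_max_left _ _) hRz
  have hazR : 4 * (m + A + 1) / ε ≤ az := le_trans (le_max_right _ _) hRz
  have haz0 : 0 < az := by linarith
  set g : ℝ → ℝ := fun t =>
    2 * (1 + |t|) + (6 * az / L) * Set.indicator {t : ℝ | M ≤ |t|} (fun t => |t|) t with hgdef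
  have h1 : Integrable (fun t : ℝ => 2 * (1 + |t|)) μ :=
    ((integrable_const (1 : ℝ)).add hμ).const_mul 2
  have h2 : Integrable (fun t : ℝ =>
      (6 * az / L) * Set.indicator {t : ℝ | M ≤ |t|} (fun t => |t|) t) μ :=
    (hμ.indicator (hmeas M)).const_mul _
  have hg_int : Integrable g μ := h1.add h2
  have hg_val : ∫ t, g t ∂μ = 2 * (m + A) + (6 * az / L) * T := by
    rw [hgdef]
    rw [integral_add h1 h2, MeasureTheory.integral_const_mul, MeasureTheory.integral_const_mul,
      integral_add (integrable_const 1) hμ, integral_const,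
      integral_indicator (hmeas M)]
    simp [hTdef, hmdef, hAdef, smul_eq_mul, Measure.real]
  have hnorm : ‖∫ t : ℝ, (1 + (t : ℂ) ^ 2) / ((t : ℂ) - z) ∂μ‖ ≤ ∫ t, g t ∂μ := by
    refine le_trans (norm_integral_le_integral_norm _) ?_
    apply integral_mono_of_nonneg (Filter.Eventually.of_forall fun t => norm_nonneg _) hg_int
    exact Filter.Eventually.of_forall fun t => by
      show ‖(1 + (t : ℂ) ^ 2) / ((t : ℂ) - z)‖ ≤ g t
      exact pointwise_bound_aux L M hL hM1 z hLz hazM t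
  rw [norm_div]
  calc ‖∫ t : ℝ, (1 + (t : ℂ) ^ 2) / ((t : ℂ) - z) ∂μ‖ / az
      ≤ (∫ t, g t ∂μ) / az := by gcongr
    _ = 2 * (m + A) / az + (6 / L) * T := by
        rw [hg_val]
        field_simp
    _ ≤ ε / 2 + ε / 2 := by
        apply add_le_add _ hMtail
        rw [div_le_iff₀ haz0]
        have hkey : ε / 2 * (4 * (m + A + 1) / ε) = 2 * (m + A + 1) := by
          field_simp; ring
        nlinarith [mul_le_mul_of_nonneg_left hazR (le_of_lt (half_pos hε))]
    _ = ε := by ring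
end

section
/- Let (a_k) ⊂ (0,∞) and (γ_k) ⊂ ℝ∖{0} be sequences satisfying: Σ_k a_k/|γ_k| < ∞; γ_k = (−1)^k |γ_k|, |γ_1| ≥ 1 and 4|γ_k| ≤ |γ_{k+1}| for all k; Σ_{l=1}^{k} a_l ≤ |γ_k|/(4k) and Σ_{l=k+1}^{∞} a_l/|γ_l| ≤ |γ_k|/(8k) for all k; and Σ_{l=1}^{k−1} a_l ≤ a_k/(80k) and Σ_{l=k+1}^{∞} a_l/|γ_l| ≤ a_k/(160 k |γ_k|) for all k. Define f(z) = z + Σ_{k=1}^{∞} a_k/(γ_k − z) on ℍ and set z_n = x_n + i y_n = f^[n](i). Then for every k ∈ ℕ and every n ∈ ℕ with y_n ≤ |γ_k|/k, one has |x_n| ≤ 2|γ_k|. -/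
open Filter Topology

set_option maxHeartbeats 2000000 in
/-- orbit control for the example with slope set `[0, π]`. Under the
summability and growth conditions on `(a_k)` and `(γ_k)` (conditions (1)-(4) of the
paper), for the orbit `z_n = x_n + i y_n = f^[n](i)` of `f(z) = z + ∑_k a_k/(γ_k - z)`,
whenever `y_n ≤ |γ_k|/k` one has `|x_n| ≤ 2|γ_k|`. -/
theorem orbit_control_slope_zero_pi (a γ : ℕ → ℝ)
    (hapos : ∀ k : ℕ, 1 ≤ k → 0 < a k)
    (hγne : ∀ k : ℕ, 1 ≤ k → γ k ≠ 0)
    (hsum : Summable (fun k : ℕ => a (k + 1) / |γ (k + 1)|))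
    (hsign : ∀ k : ℕ, 1 ≤ k → γ k = (-1 : ℝ) ^ k * |γ k|)
    (hγ1 : 1 ≤ |γ 1|)
    (hγgrow : ∀ k : ℕ, 1 ≤ k → 4 * |γ k| ≤ |γ (k + 1)|)
    (hsmall₁ : ∀ k : ℕ, 1 ≤ k → ∑ l ∈ Finset.Icc 1 k, a l ≤ |γ k| / (4 * (k : ℝ)))
    (hsmall₂ : ∀ k : ℕ, 1 ≤ k →
      (∑' l : ℕ, a (k + 1 + l) / |γ (k + 1 + l)|) ≤ |γ k| / (8 * (k : ℝ)))
    (hctrl₁ : ∀ k : ℕ, 1 ≤ k →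
      ∑ l ∈ Finset.Icc 1 (k - 1), a l ≤ a k / (80 * (k : ℝ)))
    (hctrl₂ : ∀ k : ℕ, 1 ≤ k →
      (∑' l : ℕ, a (k + 1 + l) / |γ (k + 1 + l)|) ≤ a k / (160 * (k : ℝ) * |γ k|)) :
    let f : ℂ → ℂ := fun z => z + ∑' k : ℕ, (a (k + 1) : ℂ) / ((γ (k + 1) : ℂ) - z)
    ∀ k : ℕ, 1 ≤ k → ∀ n : ℕ,
      (f^[n] Complex.I).im ≤ |γ k| / (k : ℝ) →
      |(f^[n] Complex.I).re| ≤ 2 * |γ k| := by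
  intro f k hk
  have apos : ∀ l : ℕ, 0 < a (l + 1) := fun l => hapos (l + 1) (by omega)
  have hmono : ∀ l m : ℕ, 1 ≤ l → l ≤ m → |γ l| ≤ |γ m| := by
    intro l m hl hlm
    induction m, hlm using Nat.le_induction with
    | base => exact le_rfl
    | succ m hm ih =>
      have h1 := hγgrow m (le_trans hl hm)
      have h2 := abs_nonneg (γ m)
      linarith
  have hΓpos : (0:ℝ) < |γ k| := abs_pos.2 (hγne k hk)
  have hkR : (1:ℝ) ≤ (k:ℝ) := by exact_mod_cast hk
  have hkpos : (0:ℝ) < (k:ℝ) := by linarith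
  have hγ4 : ∀ l : ℕ, k ≤ l → 4 * |γ k| ≤ |γ (l + 1)| :=
    fun l hl => (hγgrow k hk).trans (hmono (k+1) (l+1) (by omega) (by omega))
  -- nonvanishing of denominators in the upper half plane
  have hwne : ∀ (z : ℂ), 0 < z.im → ∀ l : ℕ, ((γ (l+1) : ℂ) - z) ≠ 0 := by
    intro z hz l h
    have : ((γ (l+1) : ℂ) - z).im = 0 := by rw [h]; rfl
    simp only [Complex.sub_im, Complex.ofReal_im, zero_sub, neg_eq_zero] at this
    linarith
  -- summability of the series in the upper half-plane (with im ≥ 1)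
  have key : ∀ z : ℂ, 1 ≤ z.im →
      Summable (fun l : ℕ => (a (l+1) : ℂ) / ((γ (l+1) : ℂ) - z)) := by
    intro z hz
    apply Summable.of_norm
    refine Summable.of_nonneg_of_le (fun l => norm_nonneg _) (fun l => ?_)
      (hsum.mul_left (2*(1+|z.re|)))
    rw [norm_div, Complex.norm_real, Real.norm_eq_abs, abs_of_pos (apos l)]
    set w := (γ (l+1) : ℂ) - z with hw
    have hwim : w.im = -z.im := by simp [hw]
    have h1 : (1:ℝ) ≤ ‖w‖ := by
      have := Complex.abs_im_le_norm w
      rw [hwim, abs_neg, abs_of_pos (by linarith : (0:ℝ) < z.im)] at this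
      linarith
    have h2 : |γ (l+1)| - |z.re| ≤ ‖w‖ := by
      have hre : w.re = γ (l+1) - z.re := by simp [hw]
      have := Complex.abs_re_le_norm w
      rw [hre] at this
      have := abs_sub_abs_le_abs_sub (γ (l+1)) z.re
      linarith [abs_sub_abs_le_abs_sub (γ (l+1)) z.re]
    have hwpos : (0:ℝ) < ‖w‖ := by linarith
    have hγlpos : (0:ℝ) < |γ (l+1)| := abs_pos.2 (hγne (l+1) (by omega))
    have hx0 : (0:ℝ) ≤ |z.re| := abs_nonneg _
    have hγle : |γ (l+1)| ≤ 2*(1+|z.re|)*‖w‖ := by nlinarith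
    rw [← mul_div_assoc, div_le_div_iff₀ hwpos hγlpos]
    nlinarith [mul_le_mul_of_nonneg_left hγle (apos l).le]
  -- real and imaginary parts of the terms
  have t_re : ∀ (z : ℂ) (l : ℕ), ((a (l+1) : ℂ) / ((γ (l+1) : ℂ) - z)).re
      = a (l+1) * (γ (l+1) - z.re) / Complex.normSq ((γ (l+1) : ℂ) - z) := by
    intro z l
    rw [Complex.div_re]
    simp [Complex.sub_im, Complex.sub_re]
    try ring
  have t_im : ∀ (z : ℂ) (l : ℕ), ((a (l+1) : ℂ) / ((γ (l+1) : ℂ) - z)).im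
      = a (l+1) * z.im / Complex.normSq ((γ (l+1) : ℂ) - z) := by
    intro z l
    rw [Complex.div_im]
    simp [Complex.sub_im, Complex.sub_re]
    try ring
  -- the basic structure of f on points with im ≥ 1
  have him : ∀ z : ℂ, 1 ≤ z.im →
      z.im ≤ (f z).im ∧
      (f z).re = z.re + ∑' l : ℕ, a (l+1) * (γ (l+1) - z.re) /
        Complex.normSq ((γ (l+1) : ℂ) - z) := by
    intro z hz
    have hS := key z hz
    have hfz : f z = z + ∑' l : ℕ, (a (l+1) : ℂ) / ((γ (l+1) : ℂ) - z) := rfl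
    constructor
    · rw [hfz, Complex.add_im]
      have : (∑' l : ℕ, (a (l+1) : ℂ) / ((γ (l+1) : ℂ) - z)).im
          = ∑' l : ℕ, ((a (l+1) : ℂ) / ((γ (l+1) : ℂ) - z)).im := Complex.im_tsum hS
      rw [this]
      have hnn : (0:ℝ) ≤ ∑' l : ℕ, ((a (l+1) : ℂ) / ((γ (l+1) : ℂ) - z)).im := by
        apply tsum_nonneg
        intro l
        rw [t_im]
        apply div_nonneg
        · exact mul_nonneg (apos l).le (by linarith)
        · exact Complex.normSq_nonneg _
      linarith
    · rw [hfz, Complex.add_re, Complex.re_tsum hS]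
      congr 1
      exact tsum_congr fun l => t_re z l
  -- the imaginary part of the orbit is at least 1
  have hy : ∀ n : ℕ, 1 ≤ (f^[n] Complex.I).im := by
    intro n
    induction n with
    | zero => simp
    | succ n ih =>
      rw [Function.iterate_succ_apply']
      exact le_trans ih (him _ ih).1
  -- the key step lemma
  have step : ∀ z : ℂ, 1 ≤ z.im → z.im ≤ |γ k| / (k:ℝ) → |z.re| ≤ 2 * |γ k| →
      |(f z).re| ≤ 2 * |γ k| := by
    intro z hz1 hzΓ hx
    obtain ⟨-, hre⟩ := him z hz1
    set x := z.re with hxdef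
    set Γ := |γ k| with hΓdef
    set r : ℕ → ℝ := fun l =>
      a (l+1) * (γ (l+1) - x) / Complex.normSq ((γ (l+1) : ℂ) - z) with hrdef
    have hS := key z hz1
    have hrs : Summable r := by
      have h1 : Summable (fun l : ℕ => ((a (l+1) : ℂ) / ((γ (l+1) : ℂ) - z)).re) :=
        hS.map Complex.reCLM Complex.reCLM.continuous
      exact h1.congr fun l => t_re z l
    -- basic norm facts
    have hwim : ∀ l : ℕ, ((γ (l+1) : ℂ) - z).im = -z.im := by intro l; simp
    have hwre : ∀ l : ℕ, ((γ (l+1) : ℂ) - z).re = γ (l+1) - x := by intro l; simp [hxdef]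
    have hw1 : ∀ l : ℕ, (1:ℝ) ≤ ‖(γ (l+1) : ℂ) - z‖ := by
      intro l
      have := Complex.abs_im_le_norm ((γ (l+1) : ℂ) - z)
      rw [hwim l, abs_neg, abs_of_pos (by linarith : (0:ℝ) < z.im)] at this
      linarith
    have hrabs : ∀ l : ℕ, |r l| ≤ a (l+1) / ‖(γ (l+1) : ℂ) - z‖ := by
      intro l
      have h1 : r l = ((a (l+1) : ℂ) / ((γ (l+1) : ℂ) - z)).re := (t_re z l).symm
      rw [h1]
      have h2 := Complex.abs_re_le_norm ((a (l+1) : ℂ) / ((γ (l+1) : ℂ) - z))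
      rw [norm_div, Complex.norm_real, Real.norm_eq_abs,
        abs_of_pos (apos l)] at h2
      exact h2
    have hrb1 : ∀ l : ℕ, |r l| ≤ a (l+1) := by
      intro l
      refine (hrabs l).trans ?_
      calc a (l+1) / ‖(γ (l+1) : ℂ) - z‖ ≤ a (l+1) / 1 :=
        div_le_div_of_nonneg_left (apos l).le one_pos (hw1 l)
      _ = a (l+1) := div_one _
    -- tail bounds
    have htail : ∀ i : ℕ, |r (i + k)| ≤ 2 * (a (k+1+i) / |γ (k+1+i)|) := by
      intro i
      have hidx : i + k + 1 = k + 1 + i := by omega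
      have hγbig : 4 * Γ ≤ |γ (i + k + 1)| := hγ4 (i+k) (by omega)
      have hγpos' : (0:ℝ) < |γ (i+k+1)| := by linarith
      have hnw : |γ (i+k+1)| / 2 ≤ ‖(γ (i+k+1) : ℂ) - z‖ := by
        have := Complex.abs_re_le_norm ((γ (i+k+1) : ℂ) - z)
        rw [hwre (i+k)] at this
        have h2 := abs_sub_abs_le_abs_sub (γ (i+k+1)) x
        have h3 : |x| ≤ 2 * Γ := hx
        linarith
      have hra := hrabs (i + k)
      rw [hidx] at hra hγbig hγpos' hnw
      refine hra.trans ?_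
      have hwpos : (0:ℝ) < ‖(γ (k+1+i) : ℂ) - z‖ := by linarith
      rw [← mul_div_assoc, div_le_div_iff₀ hwpos hγpos']
      nlinarith [(hapos (k+1+i) (by omega)).le]
    have htail_sum : Summable (fun i : ℕ => a (k+1+i) / |γ (k+1+i)|) := by
      have h1 : Summable (fun i : ℕ => a (i+k+1) / |γ (i+k+1)|) :=
        (summable_nat_add_iff k).2 hsum
      exact h1.congr fun i => by rw [show i + k + 1 = k + 1 + i from by omega]
    have htail_abs_sum : Summable (fun i : ℕ => |r (i + k)|) :=
      Summable.of_nonneg_of_le (fun i => abs_nonneg _) htail (htail_sum.mul_left 2)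
    have hT : |∑' i : ℕ, r (i + k)| ≤ 2 * ∑' i : ℕ, a (k+1+i) / |γ (k+1+i)| := by
      calc |∑' i : ℕ, r (i + k)| ≤ ∑' i : ℕ, |r (i + k)| := by
            have := norm_tsum_le_tsum_norm (f := fun i => r (i + k)) (by
              simpa [Real.norm_eq_abs] using htail_abs_sum)
            simpa [Real.norm_eq_abs] using this
        _ ≤ ∑' i : ℕ, 2 * (a (k+1+i) / |γ (k+1+i)|) :=
            Summable.tsum_le_tsum htail htail_abs_sum (htail_sum.mul_left 2)
        _ = 2 * ∑' i : ℕ, a (k+1+i) / |γ (k+1+i)| := tsum_mul_left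
    have hTsmall : |∑' i : ℕ, r (i + k)| ≤ Γ / (4 * (k:ℝ)) := by
      refine hT.trans ?_
      have h1 := hsmall₂ k hk
      have hKne : (k:ℝ) ≠ 0 := ne_of_gt hkpos
      calc 2 * ∑' i : ℕ, a (k+1+i) / |γ (k+1+i)| ≤ 2 * (|γ k| / (8 * (k:ℝ))) := by linarith
        _ = |γ k| / (4 * (k:ℝ)) := by field_simp; ring
    -- finite part bound
    have hF : |∑ i ∈ Finset.range k, r i| ≤ Γ / (4 * (k:ℝ)) := by
      calc |∑ i ∈ Finset.range k, r i| ≤ ∑ i ∈ Finset.range k, |r i| :=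
            Finset.abs_sum_le_sum_abs _ _
        _ ≤ ∑ i ∈ Finset.range k, a (i+1) := Finset.sum_le_sum fun i _ => hrb1 i
        _ = ∑ l ∈ Finset.Icc 1 k, a l := by
            rw [← Finset.Ico_add_one_right_eq_Icc, Finset.sum_Ico_eq_sum_range]
            simp [Nat.add_comm]
        _ ≤ Γ / (4 * (k:ℝ)) := hsmall₁ k hk
    -- splitting of the sum
    have hsplit : ∑' l : ℕ, r l = ∑ i ∈ Finset.range k, r i + ∑' i : ℕ, r (i + k) :=
      (Summable.sum_add_tsum_nat_add k hrs).symm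
    have hrenew : (f z).re = x + (∑ i ∈ Finset.range k, r i + ∑' i : ℕ, r (i + k)) := by
      rw [hre, ← hsplit]
    have hΓk : Γ / (4 * (k:ℝ)) ≤ Γ / 4 := by
      apply div_le_div_of_nonneg_left hΓpos.le (by norm_num)
      nlinarith
    -- case analysis on x
    rcases le_or_gt |x| (3/2 * Γ) with hmid | hbig
    · -- middle case
      rw [hrenew]
      have h1 := abs_add_le x (∑ i ∈ Finset.range k, r i + ∑' i : ℕ, r (i + k))
      have h2 := abs_add_le (∑ i ∈ Finset.range k, r i) (∑' i : ℕ, r (i + k))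
      calc |x + (∑ i ∈ Finset.range k, r i + ∑' i : ℕ, r (i + k))|
          ≤ |x| + |∑ i ∈ Finset.range k, r i + ∑' i : ℕ, r (i + k)| := h1
        _ ≤ 3/2 * Γ + (Γ/4 + Γ/4) := by
            have := abs_add_le (∑ i ∈ Finset.range k, r i) (∑' i : ℕ, r (i + k))
            linarith [hF.trans hΓk, hTsmall.trans hΓk]
        _ ≤ 2 * Γ := by linarith
    · -- extreme cases
      have hγleΓ : ∀ i : ℕ, i < k → |γ (i+1)| ≤ Γ := fun i hi =>
        hmono (i+1) k (by omega) (by omega)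
      have hNk : (0:ℝ) < Complex.normSq ((γ k : ℂ) - z) := by
        rw [Complex.normSq_pos]
        have := hwne z (by linarith) (k-1)
        rwa [show k - 1 + 1 = k from by omega] at this
      have hNk10 : Complex.normSq ((γ k : ℂ) - z) ≤ 10 * Γ^2 := by
        rw [Complex.normSq_apply]
        have h1 : ((γ k : ℂ) - z).re = γ k - x := by simp [hxdef]
        have h2 : ((γ k : ℂ) - z).im = -z.im := by simp
        rw [h1, h2]
        have hgk : |γ k| = Γ := rfl
        have h3 : |γ k - x| ≤ 3 * Γ := by
          have := abs_sub (γ k) x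
          have h4 : |γ k| ≤ Γ := le_of_eq hgk
          have := abs_abs_sub_abs_le_abs_sub (γ k) x
          have h5 := abs_sub_abs_le_abs_sub (γ k) x
          have h6 : |γ k - x| ≤ |γ k| + |x| := abs_sub (γ k) x
          linarith
        have h7 : z.im ≤ Γ := by
          have : Γ / (k:ℝ) ≤ Γ := by
            rw [div_le_iff₀ hkpos]; nlinarith
          linarith
        have h8 : (0:ℝ) < z.im := by linarith
        nlinarith [abs_nonneg (γ k - x), sq_abs (γ k - x), abs_le.1 h3]
      have hTctrl : |∑' i : ℕ, r (i + k)| ≤ a k / (80 * (k:ℝ) * Γ) := by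
        refine hT.trans ?_
        have h1 := hctrl₂ k hk
        have hak := hapos k hk
        rw [show (160:ℝ) * (k:ℝ) * |γ k| = 2 * (80 * (k:ℝ) * Γ) by rw [hΓdef]; ring] at h1
        rw [div_mul_eq_div_div_swap] at h1
        linarith [ mul_le_mul_of_nonneg_left h1 (by norm_num : (0:ℝ) ≤ 2) ]
      have hTc' : |∑' i : ℕ, r (i + k)| ≤ a k / (80 * Γ) := by
        refine hTctrl.trans ?_
        apply div_le_div_of_nonneg_left (hapos k hk).le (by positivity)
        nlinarith
      have hak20 : a k / (80 * Γ) ≤ a k / (20 * Γ) := by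
        apply div_le_div_of_nonneg_left (hapos k hk).le (by positivity)
        nlinarith
      rcases lt_abs.1 hbig with hpos | hneg
      · -- x > 3/2 Γ
        have hsign' : ∀ i ∈ Finset.range k, r i ≤ 0 := by
          intro i hi
          rw [hrdef]
          apply div_nonpos_of_nonpos_of_nonneg _ (Complex.normSq_nonneg _)
          apply mul_nonpos_of_nonneg_of_nonpos (apos i).le
          have := hγleΓ i (Finset.mem_range.1 hi)
          have := le_abs_self (γ (i+1))
          linarith
        have hFneg : ∑ i ∈ Finset.range k, r i ≤ r (k-1) := by
          have h1 : - r (k-1) ≤ ∑ i ∈ Finset.range k, - r i :=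
            Finset.single_le_sum (f := fun i => - r i)
              (fun i hi => neg_nonneg.2 (hsign' i hi)) (Finset.mem_range.2 (by omega))
          rw [Finset.sum_neg_distrib] at h1
          linarith
        have hrk : r (k-1) ≤ - (a k / (20 * Γ)) := by
          rw [hrdef]
          simp only
          rw [show k - 1 + 1 = k from by omega, ← neg_div,
            div_le_div_iff₀ hNk (by positivity : (0:ℝ) < 20 * Γ)]
          have hγkx : γ k - x ≤ - (Γ / 2) := by
            have := le_abs_self (γ k)
            rw [← hΓdef] at this
            linarith
          have hak := hapos k hk
          nlinarith [mul_le_mul_of_nonneg_left hγkx hak.le,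
            mul_le_mul_of_nonneg_left hNk10 hak.le, hΓpos, hNk]
        have hSle : ∑ i ∈ Finset.range k, r i + ∑' i : ℕ, r (i + k) ≤ 0 := by
          have := abs_le.1 hTc'
          linarith
        have hSge : -(Γ/2) ≤ ∑ i ∈ Finset.range k, r i + ∑' i : ℕ, r (i + k) := by
          have h1 := abs_le.1 (hF.trans hΓk)
          have h2 := abs_le.1 (hTsmall.trans hΓk)
          linarith
        obtain ⟨hxlo, hxhi⟩ := abs_le.1 hx
        rw [hrenew, abs_le]
        constructor
        · linarith
        · linarith
      · -- x < - 3/2 Γ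
        have hxneg : x < - (3/2 * Γ) := by linarith
        have hsign' : ∀ i ∈ Finset.range k, 0 ≤ r i := by
          intro i hi
          rw [hrdef]
          apply div_nonneg _ (Complex.normSq_nonneg _)
          apply mul_nonneg (apos i).le
          have := hγleΓ i (Finset.mem_range.1 hi)
          have := neg_abs_le (γ (i+1))
          linarith
        have hFpos : r (k-1) ≤ ∑ i ∈ Finset.range k, r i :=
          Finset.single_le_sum hsign' (Finset.mem_range.2 (by omega))
        have hrk : a k / (20 * Γ) ≤ r (k-1) := by
          rw [hrdef]
          simp only
          rw [show k - 1 + 1 = k from by omega,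
            div_le_div_iff₀ (by positivity : (0:ℝ) < 20 * Γ) hNk]
          have hγkx : Γ / 2 ≤ γ k - x := by
            have := neg_abs_le (γ k)
            rw [← hΓdef] at this
            linarith
          have hak := hapos k hk
          nlinarith [mul_le_mul_of_nonneg_left hγkx hak.le,
            mul_le_mul_of_nonneg_left hNk10 hak.le, hΓpos, hNk]
        have hSge : 0 ≤ ∑ i ∈ Finset.range k, r i + ∑' i : ℕ, r (i + k) := by
          have := abs_le.1 hTc'
          linarith
        have hSle : ∑ i ∈ Finset.range k, r i + ∑' i : ℕ, r (i + k) ≤ Γ/2 := by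
          have h1 := abs_le.1 (hF.trans hΓk)
          have h2 := abs_le.1 (hTsmall.trans hΓk)
          linarith
        obtain ⟨hxlo, hxhi⟩ := abs_le.1 hx
        rw [hrenew, abs_le]
        constructor
        · linarith
        · linarith
  -- the main induction
  intro n
  induction n with
  | zero =>
    intro _
    simp only [Function.iterate_zero_apply, Complex.I_re, abs_zero]
    positivity
  | succ n ih =>
    intro h
    have hz1 := hy n
    have hmonoim := (him _ hz1).1
    simp only [Function.iterate_succ_apply'] at h ⊢
    have hzim : (f^[n] Complex.I).im ≤ |γ k| / (k:ℝ) := le_trans hmonoim h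
    exact step _ hz1 hzim (ih hzim)
end

section
/- Let (a_k) ⊂ (0,∞) and (γ_k) ⊂ (0,∞) be sequences satisfying: Σ_k a_k/γ_k < ∞; γ_1 ≥ 1 and 4γ_k ≤ γ_{k+1} for all k; Σ_{l=1}^{k} a_l ≤ γ_k/(24k) and Σ_{l=k+1}^{∞} a_l/γ_l ≤ γ_k/(24k) for all k; and Σ_{l=1}^{k−1} a_l ≤ a_k/(64k²) and Σ_{l=k+1}^{∞} a_l/γ_l ≤ a_k/(100 k² γ_k) for all k. Define f(z) = z + Σ_{k=1}^{∞} a_k/(γ_k − z) on ℍ and set z_n = x_n + i y_n = f^[n](i). Fix k ∈ ℕ and let Ω = {x + iy ∈ ℂ : γ_k/2 ≤ x ≤ 3γ_k/2, 1 ≤ y ≤ k·γ_k}. If N ≤ M are natural numbers such that z_n ∈ Ω for all N ≤ n ≤ M and z_{M+1} ∉ Ω, then γ_k/2 ≤ x_{M+1} ≤ 3γ_k/2 and y_{M+1} > k·γ_k. -/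
open Filter Topology

lemma aux_re (a c : ℝ) (z : ℂ) :
    ((a : ℂ) / ((c : ℂ) - z)).re = a * (c - z.re) / ((c - z.re)^2 + z.im^2) := by
  rw [Complex.div_re]
  simp [Complex.normSq_apply, Complex.sub_re, Complex.sub_im]
  ring_nf

lemma aux_im (a c : ℝ) (z : ℂ) :
    ((a : ℂ) / ((c : ℂ) - z)).im = a * z.im / ((c - z.re)^2 + z.im^2) := by
  rw [Complex.div_im]
  simp [Complex.normSq_apply, Complex.sub_re, Complex.sub_im]
  ring_nf

lemma aux_norm (a c : ℝ) (z : ℂ) (ha : 0 ≤ a) (h : 0 < c - z.re) :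
    ‖(a : ℂ) / ((c : ℂ) - z)‖ ≤ a / (c - z.re) := by
  rw [norm_div, Complex.norm_real]
  gcongr
  · exact (abs_of_nonneg ha).le
  · have h2 : c - z.re = ((c:ℂ) - z).re := by simp [Complex.sub_re]
    rw [h2]
    exact (le_abs_self _).trans (Complex.abs_re_le_norm _)

lemma aux_norm2 (a c : ℝ) (z : ℂ) (ha : 0 ≤ a) (h : 0 < z.im) :
    ‖(a : ℂ) / ((c : ℂ) - z)‖ ≤ a / z.im := by
  rw [norm_div, Complex.norm_real]
  gcongr
  · exact (abs_of_nonneg ha).le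
  · have h2 : z.im = |((c:ℂ) - z).im| := by
      simp [Complex.sub_im, abs_of_pos h]
    rw [h2]
    exact Complex.abs_im_le_norm _

lemma grow (γ : ℕ → ℝ) (hγpos : ∀ k : ℕ, 1 ≤ k → 0 < γ k)
    (hγgrow : ∀ k : ℕ, 1 ≤ k → 4 * γ k ≤ γ (k + 1)) :
    ∀ m n : ℕ, 1 ≤ m → m < n → 4 * γ m ≤ γ n := by
  intro m n hm hmn
  induction n with
  | zero => omega
  | succ p ih =>
    rcases Nat.lt_succ_iff_lt_or_eq.mp hmn with h | h
    · have h1 := ih h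
      have hp : (1:ℕ) ≤ p := by omega
      have h2 := hγgrow p hp
      have h3 := hγpos p hp
      linarith
    · subst h; exact hγgrow m hm

lemma icc_sum_eq (a : ℕ → ℝ) (k : ℕ) :
    ∑ l ∈ Finset.Icc 1 k, a l = ∑ i ∈ Finset.range k, a (i + 1) := by
  rw [show Finset.Icc 1 k = Finset.Ico 1 (k+1) by rw [Finset.Ico_add_one_right_eq_Icc],
    Finset.sum_Ico_eq_sum_range]
  simp [Nat.add_comm]

set_option maxHeartbeats 2000000 in
lemma step (a γ : ℕ → ℝ)
    (hapos : ∀ k : ℕ, 1 ≤ k → 0 < a k)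
    (hγpos : ∀ k : ℕ, 1 ≤ k → 0 < γ k)
    (hsum : Summable (fun k : ℕ => a (k + 1) / γ (k + 1)))
    (hγgrow : ∀ k : ℕ, 1 ≤ k → 4 * γ k ≤ γ (k + 1))
    (hsmall₁ : ∀ k : ℕ, 1 ≤ k → ∑ l ∈ Finset.Icc 1 k, a l ≤ γ k / (24 * (k : ℝ)))
    (hsmall₂ : ∀ k : ℕ, 1 ≤ k →
      (∑' l : ℕ, a (k + 1 + l) / γ (k + 1 + l)) ≤ γ k / (24 * (k : ℝ)))
    (hctrl₁ : ∀ k : ℕ, 1 ≤ k →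
      ∑ l ∈ Finset.Icc 1 (k - 1), a l ≤ a k / (64 * (k : ℝ) ^ 2))
    (hctrl₂ : ∀ k : ℕ, 1 ≤ k →
      (∑' l : ℕ, a (k + 1 + l) / γ (k + 1 + l)) ≤ a k / (100 * (k : ℝ) ^ 2 * γ k))
    (k : ℕ) (hk : 1 ≤ k) (z : ℂ)
    (hx1 : γ k / 2 ≤ z.re) (hx2 : z.re ≤ 3 * γ k / 2)
    (hy1 : 1 ≤ z.im) (hy2 : z.im ≤ (k:ℝ) * γ k) :
    (0 ≤ (∑' l : ℕ, (a (l + 1) : ℂ) / ((γ (l + 1) : ℂ) - z)).im) ∧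
    |(∑' l : ℕ, (a (l + 1) : ℂ) / ((γ (l + 1) : ℂ) - z)).re| ≤ γ k / 4 ∧
    (z.re ≤ 3 * γ k / 4 → 0 ≤ (∑' l : ℕ, (a (l + 1) : ℂ) / ((γ (l + 1) : ℂ) - z)).re) ∧
    (5 * γ k / 4 ≤ z.re → (∑' l : ℕ, (a (l + 1) : ℂ) / ((γ (l + 1) : ℂ) - z)).re ≤ 0) := by
  have hγk : 0 < γ k := hγpos k hk
  have hkR : (1:ℝ) ≤ (k:ℝ) := by exact_mod_cast hk
  have hy0 : 0 < z.im := lt_of_lt_of_le one_pos hy1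
  set g : ℕ → ℂ := fun l => (a (l + 1) : ℂ) / ((γ (l + 1) : ℂ) - z) with hg
  -- tail separation
  have hsep : ∀ l : ℕ, (5/8) * γ (k + 1 + l) ≤ γ (k + 1 + l) - z.re := by
    intro l
    have h1 : 4 * γ k ≤ γ (k + 1 + l) := grow γ hγpos hγgrow k (k + 1 + l) hk (by omega)
    linarith
  have hγtailpos : ∀ l : ℕ, 0 < γ (k + 1 + l) := fun l => hγpos _ (by omega)
  have hsep' : ∀ l : ℕ, 0 < γ (k + 1 + l) - z.re := fun l =>
    lt_of_lt_of_le (by have := hγtailpos l; linarith) (hsep l)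
  -- tail summable bound
  have hT : Summable (fun l : ℕ => a (k + 1 + l) / γ (k + 1 + l)) := by
    have := (summable_nat_add_iff k).mpr hsum
    refine this.congr fun n => ?_
    have e : n + k + 1 = k + 1 + n := by omega
    rw [e]
  have hTB : Summable (fun l : ℕ => (8/5) * (a (k + 1 + l) / γ (k + 1 + l))) := hT.mul_left _
  have hgtail_norm : ∀ l : ℕ, ‖g (l + k)‖ ≤ (8/5) * (a (k + 1 + l) / γ (k + 1 + l)) := by
    intro l
    have e : l + k + 1 = k + 1 + l := by omega
    have h1 : ‖g (l + k)‖ ≤ a (k + 1 + l) / (γ (k + 1 + l) - z.re) := by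
      simp only [hg, e]
      exact aux_norm _ _ _ (hapos _ (by omega)).le (hsep' l)
    refine h1.trans ?_
    rw [mul_div_assoc', div_le_div_iff₀ (hsep' l) (hγtailpos l)]
    have := hsep l
    nlinarith [hapos (k+1+l) (by omega), hγtailpos l]
  have hgs : Summable g := by
    refine (summable_nat_add_iff k).mp ?_
    exact Summable.of_norm_bounded hTB hgtail_norm
  have hgnorm : Summable (fun l => ‖g l‖) := by
    refine (summable_nat_add_iff k).mp ?_
    exact Summable.of_nonneg_of_le (fun l => norm_nonneg _) hgtail_norm hTB
  have hr : Summable (fun l => (g l).re) := ⟨_, Complex.hasSum_re hgs.hasSum⟩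
  have hre : ∀ l : ℕ, (g l).re
      = a (l+1) * (γ (l+1) - z.re) / ((γ (l+1) - z.re)^2 + z.im^2) := fun l => aux_re _ _ _
  have hDpos : ∀ m : ℕ, 0 < (γ m - z.re)^2 + z.im^2 := fun m =>
    add_pos_of_nonneg_of_pos (sq_nonneg _) (by positivity)
  refine ⟨?_, ?_, ?_, ?_⟩
  · -- imaginary part nonneg
    rw [Complex.im_tsum hgs]
    refine tsum_nonneg fun l => ?_
    rw [hg, aux_im]
    have := hapos (l+1) (by omega)
    have := hDpos (l+1)
    positivity

  · -- |re| ≤ γ k / 4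
    have h1 : |(∑' l, g l).re| ≤ ‖∑' l, g l‖ := by
      exact Complex.abs_re_le_norm _
    have h2 : ‖∑' l, g l‖ ≤ ∑' l, ‖g l‖ := norm_tsum_le_tsum_norm hgnorm
    have hsplit := Summable.sum_add_tsum_nat_add k hgnorm
    have hfront : ∑ i ∈ Finset.range k, ‖g i‖ ≤ γ k / 24 := by
      have hb : ∑ i ∈ Finset.range k, ‖g i‖ ≤ ∑ i ∈ Finset.range k, a (i + 1) := by
        refine Finset.sum_le_sum fun i _ => ?_
        have h3 := aux_norm2 (a (i+1)) (γ (i+1)) z (hapos _ (by omega)).le hy0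
        refine h3.trans ?_
        rw [div_le_iff₀ hy0]
        nlinarith [hapos (i+1) (by omega : 1 ≤ i+1)]
      have h4 := hsmall₁ k hk
      rw [icc_sum_eq] at h4
      have h5 : γ k / (24 * (k:ℝ)) ≤ γ k / 24 := by
        rw [div_le_div_iff₀ (by positivity) (by norm_num)]
        nlinarith
      linarith
    have hsn : Summable (fun l => ‖g (l + k)‖) := (summable_nat_add_iff k).mpr hgnorm
    have ht1 : ∑' l, ‖g (l + k)‖ ≤ ∑' l, (8/5) * (a (k + 1 + l) / γ (k + 1 + l)) :=
      Summable.tsum_le_tsum hgtail_norm hsn hTB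
    have ht2 : ∑' l, (8/5) * (a (k + 1 + l) / γ (k + 1 + l))
        = (8/5) * ∑' l, (a (k + 1 + l) / γ (k + 1 + l)) := tsum_mul_left
    have ht3 := hsmall₂ k hk
    have h5 : γ k / (24 * (k:ℝ)) ≤ γ k / 24 := by
      rw [div_le_div_iff₀ (by positivity) (by norm_num)]
      nlinarith
    have hT0 : 0 ≤ ∑' l, (a (k + 1 + l) / γ (k + 1 + l)) :=
      tsum_nonneg fun l => div_nonneg (hapos _ (by omega)).le (hγtailpos l).le
    have htail : ∑' l, ‖g (l + k)‖ ≤ γ k / 15 := by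
      rw [ht2] at ht1
      nlinarith
    rw [abs_le]
    constructor <;> linarith [neg_abs_le (∑' l, g l).re, le_abs_self (∑' l, g l).re]

  · -- left barrier
    intro hx3
    obtain ⟨k', rfl⟩ : ∃ k', k = k' + 1 := ⟨k - 1, by omega⟩
    set K := k' + 1 with hK
    set P := a K / ((K:ℝ)^2 * γ K) with hPdef
    have hP0 : 0 < P := by
      have := hapos K hk
      positivity
    rw [Complex.re_tsum hgs, ← Summable.sum_add_tsum_nat_add K hr]
    have htail0 : 0 ≤ ∑' l, (g (l + K)).re := by
      refine tsum_nonneg fun l => ?_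
      rw [hre (l + K)]
      have e : l + K + 1 = K + 1 + l := by omega
      rw [e]
      exact div_nonneg (mul_nonneg (hapos _ (by omega)).le (hsep' l).le) (hDpos _).le
    have e1 : (γ K - z.re)^2 ≤ (γ K)^2 / 4 := by nlinarith
    have e2 : z.im^2 ≤ (K:ℝ)^2 * (γ K)^2 := by nlinarith
    have hK2 : (1:ℝ) ≤ (K:ℝ)^2 := by nlinarith
    have hd1 : (γ K - z.re)^2 + z.im^2 ≤ 2 * (K:ℝ)^2 * (γ K)^2 := by
      nlinarith [mul_le_mul_of_nonneg_right hK2 (sq_nonneg (γ K))]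
    have hPk : P * ((K:ℝ)^2 * γ K) = a K := div_mul_cancel₀ _ (by positivity)
    have hmid : (1/8) * P ≤ (g k').re := by
      rw [hre k']
      rw [le_div_iff₀ (hDpos K)]
      have l1 : (1/8) * P * ((γ K - z.re)^2 + z.im^2) ≤ (1/8) * P * (2 * (K:ℝ)^2 * (γ K)^2) :=
        mul_le_mul_of_nonneg_left hd1 (by positivity)
      have l2 : (1/8) * P * (2 * (K:ℝ)^2 * (γ K)^2) = (1/4) * γ K * (P * ((K:ℝ)^2 * γ K)) := by ring
      have l3 : a K * (γ K / 4) ≤ a K * (γ K - z.re) :=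
        mul_le_mul_of_nonneg_left (by linarith) (hapos K hk).le
      rw [l2, hPk] at l1
      linarith
    have hfront : -((4 / γ K) * ∑ l ∈ Finset.Icc 1 (K - 1), a l)
        ≤ ∑ i ∈ Finset.range k', (g i).re := by
      have hKk : K - 1 = k' := by omega
      rw [hKk, icc_sum_eq, Finset.mul_sum, ← Finset.sum_neg_distrib]
      refine Finset.sum_le_sum fun i hi => ?_
      have him : i + 1 < K := by
        simp only [Finset.mem_range] at hi; omega
      have hγm : 4 * γ (i+1) ≤ γ K := grow γ hγpos hγgrow (i+1) K (by omega) him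
      have hγmpos : 0 < γ (i+1) := hγpos _ (by omega)
      have ht : γ K / 4 ≤ z.re - γ (i+1) := by linarith
      have ht0 : 0 < z.re - γ (i+1) := by linarith
      have ham : 0 ≤ a (i+1) := (hapos _ (by omega)).le
      rw [hre i, le_div_iff₀ (hDpos (i+1))]
      have hu : (4 / γ K) * γ K = 4 := by field_simp
      have h5 : 1 ≤ (4 / γ K) * (z.re - γ (i+1)) := by
        have : (4 / γ K) * (γ K / 4) ≤ (4 / γ K) * (z.re - γ (i+1)) :=
          mul_le_mul_of_nonneg_left ht (by positivity)
        nlinarith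
      nlinarith [mul_nonneg (mul_nonneg ham ht0.le) (sub_nonneg.2 h5),
        mul_nonneg (mul_nonneg (by positivity : (0:ℝ) ≤ 4 / γ K) ham) (sq_nonneg z.im)]
    have hctrl := hctrl₁ K hk
    have hmul := mul_le_mul_of_nonneg_left hctrl (by positivity : (0:ℝ) ≤ 4 / γ K)
    have heq : (4 / γ K) * (a K / (64 * (K:ℝ)^2)) = (1/16) * P := by
      rw [hPdef]; field_simp; ring
    rw [Finset.sum_range_succ]
    nlinarith

  · -- right barrier
    intro hx4
    obtain ⟨k', rfl⟩ : ∃ k', k = k' + 1 := ⟨k - 1, by omega⟩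
    set K := k' + 1 with hK
    set P := a K / ((K:ℝ)^2 * γ K) with hPdef
    have hP0 : 0 < P := by
      have := hapos K hk
      positivity
    rw [Complex.re_tsum hgs, ← Summable.sum_add_tsum_nat_add K hr]
    have htail : ∑' l, (g (l + K)).re ≤ (8/5) * (a K / (100 * (K:ℝ)^2 * γ K)) := by
      calc ∑' l, (g (l + K)).re ≤ ∑' l, (8/5) * (a (K + 1 + l) / γ (K + 1 + l)) := by
            refine Summable.tsum_le_tsum (fun l => ?_) ((summable_nat_add_iff K).mpr hr) hTB
            exact (le_abs_self _).trans ((Complex.abs_re_le_norm _).trans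
              (hgtail_norm l))
        _ = (8/5) * ∑' l, (a (K + 1 + l) / γ (K + 1 + l)) := tsum_mul_left
        _ ≤ (8/5) * (a K / (100 * (K:ℝ)^2 * γ K)) := by nlinarith [hctrl₂ K hk]
    have e1 : (γ K - z.re)^2 ≤ (γ K)^2 / 4 := by nlinarith
    have e2 : z.im^2 ≤ (K:ℝ)^2 * (γ K)^2 := by nlinarith
    have hK2 : (1:ℝ) ≤ (K:ℝ)^2 := by nlinarith
    have hd1 : (γ K - z.re)^2 + z.im^2 ≤ 2 * (K:ℝ)^2 * (γ K)^2 := by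
      nlinarith [mul_le_mul_of_nonneg_right hK2 (sq_nonneg (γ K))]
    have hPk : P * ((K:ℝ)^2 * γ K) = a K := div_mul_cancel₀ _ (by positivity)
    have hmid : (g k').re ≤ -((1/8) * P) := by
      rw [hre k']
      rw [div_le_iff₀ (hDpos K)]
      have l1 : (1/8) * P * ((γ K - z.re)^2 + z.im^2) ≤ (1/8) * P * (2 * (K:ℝ)^2 * (γ K)^2) :=
        mul_le_mul_of_nonneg_left hd1 (by positivity)
      have l2 : (1/8) * P * (2 * (K:ℝ)^2 * (γ K)^2) = (1/4) * γ K * (P * ((K:ℝ)^2 * γ K)) := by ring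
      have l3 : a K * (γ K - z.re) ≤ a K * (-(γ K / 4)) :=
        mul_le_mul_of_nonneg_left (by linarith) (hapos K hk).le
      rw [l2, hPk] at l1
      linarith
    have hfront : ∑ i ∈ Finset.range k', (g i).re ≤ 0 := by
      refine Finset.sum_nonpos fun i hi => ?_
      have him : i + 1 < K := by
        simp only [Finset.mem_range] at hi; omega
      have hγm : 4 * γ (i+1) ≤ γ K := grow γ hγpos hγgrow (i+1) K (by omega) him
      have hγmpos : 0 < γ (i+1) := hγpos _ (by omega)
      rw [hre i]
      apply div_nonpos_of_nonpos_of_nonneg _ (hDpos _).le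
      have ham : 0 ≤ a (i+1) := (hapos _ (by omega)).le
      nlinarith
    have heq : (8/5) * (a K / (100 * (K:ℝ)^2 * γ K)) = (2/125) * P := by
      rw [hPdef]; field_simp; ring
    rw [Finset.sum_range_succ]
    nlinarith

/-- the "elevator" lemma for the example with slope set `[0, π/2]`. Under
the summability and growth conditions on `(a_k)` and positive `(γ_k)`, fix `k` and let
`Ω = {x + iy : γ_k/2 ≤ x ≤ 3γ_k/2, 1 ≤ y ≤ k γ_k}`. If the orbit `z_n = f^[n](i)`
stays in `Ω` for `N ≤ n ≤ M` and `z_{M+1} ∉ Ω`, then `γ_k/2 ≤ x_{M+1} ≤ 3γ_k/2` and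
`y_{M+1} > k γ_k`. -/
theorem elevator_lemma (a γ : ℕ → ℝ)
    (hapos : ∀ k : ℕ, 1 ≤ k → 0 < a k)
    (hγpos : ∀ k : ℕ, 1 ≤ k → 0 < γ k)
    (hsum : Summable (fun k : ℕ => a (k + 1) / γ (k + 1)))
    (hγ1 : 1 ≤ γ 1)
    (hγgrow : ∀ k : ℕ, 1 ≤ k → 4 * γ k ≤ γ (k + 1))
    (hsmall₁ : ∀ k : ℕ, 1 ≤ k → ∑ l ∈ Finset.Icc 1 k, a l ≤ γ k / (24 * (k : ℝ)))
    (hsmall₂ : ∀ k : ℕ, 1 ≤ k →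
      (∑' l : ℕ, a (k + 1 + l) / γ (k + 1 + l)) ≤ γ k / (24 * (k : ℝ)))
    (hctrl₁ : ∀ k : ℕ, 1 ≤ k →
      ∑ l ∈ Finset.Icc 1 (k - 1), a l ≤ a k / (64 * (k : ℝ) ^ 2))
    (hctrl₂ : ∀ k : ℕ, 1 ≤ k →
      (∑' l : ℕ, a (k + 1 + l) / γ (k + 1 + l)) ≤ a k / (100 * (k : ℝ) ^ 2 * γ k))
    (f : ℂ → ℂ)
    (hfdef : ∀ z : ℂ, f z = z + ∑' k : ℕ, (a (k + 1) : ℂ) / ((γ (k + 1) : ℂ) - z))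
    (k : ℕ) (hk : 1 ≤ k)
    (Ω : Set ℂ)
    (hΩ : Ω = {z : ℂ | γ k / 2 ≤ z.re ∧ z.re ≤ 3 * γ k / 2 ∧
      1 ≤ z.im ∧ z.im ≤ (k : ℝ) * γ k})
    (N M : ℕ) (hNM : N ≤ M)
    (horb : ∀ n : ℕ, N ≤ n → n ≤ M → f^[n] Complex.I ∈ Ω)
    (hout : f^[M + 1] Complex.I ∉ Ω) :
    γ k / 2 ≤ (f^[M + 1] Complex.I).re ∧
    (f^[M + 1] Complex.I).re ≤ 3 * γ k / 2 ∧
    (k : ℝ) * γ k < (f^[M + 1] Complex.I).im := by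
  have hγk : 0 < γ k := hγpos k hk
  set w := f^[M] Complex.I with hw
  have hzΩ : w ∈ Ω := horb M hNM le_rfl
  rw [hΩ, Set.mem_setOf_eq] at hzΩ
  obtain ⟨hx1, hx2, hy1, hy2⟩ := hzΩ
  have hit : f^[M + 1] Complex.I = f w := by
    rw [Function.iterate_succ_apply']
  obtain ⟨him, habs, hleft, hright⟩ := step a γ hapos hγpos hsum hγgrow hsmall₁ hsmall₂
    hctrl₁ hctrl₂ k hk w hx1 hx2 hy1 hy2
  obtain ⟨habs1, habs2⟩ := abs_le.mp habs
  have hfw : f w = w + ∑' l : ℕ, (a (l + 1) : ℂ) / ((γ (l + 1) : ℂ) - w) := hfdef w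
  have hre : (f w).re = w.re + (∑' l : ℕ, (a (l + 1) : ℂ) / ((γ (l + 1) : ℂ) - w)).re := by
    rw [hfw, Complex.add_re]
  have him2 : (f w).im = w.im + (∑' l : ℕ, (a (l + 1) : ℂ) / ((γ (l + 1) : ℂ) - w)).im := by
    rw [hfw, Complex.add_im]
  have hc1 : γ k / 2 ≤ (f w).re := by
    rcases le_or_gt w.re (3 * γ k / 4) with h | h
    · have := hleft h
      rw [hre]; linarith
    · rw [hre]; linarith
  have hc2 : (f w).re ≤ 3 * γ k / 2 := by
    rcases le_or_gt (5 * γ k / 4) w.re with h | h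
    · have := hright h
      rw [hre]; linarith
    · rw [hre]; linarith
  have hc3 : 1 ≤ (f w).im := by rw [him2]; linarith
  rw [hit] at hout ⊢
  rw [hΩ, Set.mem_setOf_eq] at hout
  push_neg at hout
  exact ⟨hc1, hc2, hout hc1 hc2 hc3⟩
end
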